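/- arXiv:1405.3052 — 8 statements merged into one kernel-verified Lean document; each statement's English description precedes it below -/
import Mathlib

section
/- Let b₀ ∈ ℝ. The following are equivalent: (i) for all real x₁, ξ₁, ξₙ, every complex root τ of the polynomial τ³ − (ξ₁² + x₁²ξₙ²)τ − b₀x₁³ξₙ³ is real; (ii) b₀² ≤ 4/27. -/
/-- Hyperbolicity of the principal symbol: all complex roots of the cubic
`τ³ − (ξ₁² + x₁²ξₙ²)τ − b₀x₁³ξₙ³` are real for all real `(x₁, ξ₁, ξₙ)` if and only if
`b₀² ≤ 4/27`. -/
theorem hyperbolic_iff_coeff_bound (b₀ : ℝ) :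
    (∀ x₁ ξ₁ ξₙ : ℝ, ∀ τ : ℂ,
        τ ^ 3 - (↑(ξ₁ ^ 2 + x₁ ^ 2 * ξₙ ^ 2) : ℂ) * τ - (↑(b₀ * x₁ ^ 3 * ξₙ ^ 3) : ℂ) = 0 →
          τ.im = 0)
      ↔ b₀ ^ 2 ≤ 4 / 27 := by
  constructor
  · intro h
    by_contra hb
    push_neg at hb
    obtain ⟨r, hrmem, hr⟩ : ∃ r ∈ Set.Icc (-(|b₀| + 2)) (|b₀| + 2), r^3 - r - b₀ = 0 := by
      have hc : ContinuousOn (fun r : ℝ => r^3 - r - b₀) (Set.Icc (-(|b₀| + 2)) (|b₀| + 2)) := by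
        fun_prop
      have hM : (2:ℝ) ≤ |b₀| + 2 := by linarith [abs_nonneg b₀]
      have hab : b₀ ≤ |b₀| := le_abs_self b₀
      have hab' : -b₀ ≤ |b₀| := neg_le_abs b₀
      have hcube : 0 ≤ (|b₀| + 2 - 2) * (|b₀| + 2)^2 :=
        mul_nonneg (by linarith) (sq_nonneg _)
      have hsq : 0 ≤ (|b₀| + 2 - 2) * (|b₀| + 2) :=
        mul_nonneg (by linarith) (by linarith)
      have h0 : (0:ℝ) ∈ Set.Icc ((fun r : ℝ => r^3 - r - b₀) (-(|b₀| + 2)))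
          ((fun r : ℝ => r^3 - r - b₀) (|b₀| + 2)) := by
        constructor <;> simp only <;> nlinarith
      have hle : -(|b₀| + 2) ≤ (|b₀| + 2) := by linarith [abs_nonneg b₀]
      obtain ⟨r, hr1, hr2⟩ := intermediate_value_Icc hle hc h0
      exact ⟨r, hr1, hr2⟩
    have hb0 : b₀ = r^3 - r := by linarith
    have hr2 : 4/3 < r^2 := by
      by_contra hr2
      push_neg at hr2
      rw [hb0] at hb
      nlinarith [mul_nonneg (sub_nonneg.mpr hr2) (sq_nonneg (r^2 - 1/3))]
    set s := Real.sqrt (3*r^2 - 4) with hs_def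
    have hs2 : s^2 = 3*r^2 - 4 := Real.sq_sqrt (by linarith)
    have hs0 : 0 < s := Real.sqrt_pos.mpr (by linarith)
    have heq : (⟨-r/2, s/2⟩ : ℂ) ^ 3 - (↑((0:ℝ) ^ 2 + (1:ℝ) ^ 2 * (1:ℝ) ^ 2) : ℂ) * ⟨-r/2, s/2⟩
        - (↑(b₀ * (1:ℝ) ^ 3 * (1:ℝ) ^ 3) : ℂ) = 0 := by
      rw [Complex.ext_iff]
      constructor
      · simp [pow_succ, Complex.mul_re, Complex.mul_im]
        ring_nf
        linear_combination (3*r/8) * hs2 + hr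
      · simp [pow_succ, Complex.mul_re, Complex.mul_im]
        ring_nf
        linear_combination (-s/8) * hs2
    have hfin : s/2 = 0 := h 1 0 1 ⟨-r/2, s/2⟩ heq
    linarith
  · intro hb x₁ ξ₁ ξₙ τ hτ
    obtain ⟨a, b⟩ := τ
    show b = 0
    by_contra him
    rw [Complex.ext_iff] at hτ
    simp [pow_succ, Complex.mul_re, Complex.mul_im] at hτ
    obtain ⟨h1, h2⟩ := hτ
    have hb2 : 0 < b^2 := by
      rcases lt_or_gt_of_ne him with h' | h' <;> nlinarith
    have hp : ξ₁^2 + x₁^2*ξₙ^2 = 3*a^2 - b^2 := by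
      have hfac : (3*a^2 - b^2 - (ξ₁^2 + x₁^2*ξₙ^2)) * b = 0 := by linear_combination h2
      rcases mul_eq_zero.mp hfac with h' | h'
      · linarith
      · exact absurd h' him
    have hq : b₀*x₁^3*ξₙ^3 = -2*a^3 - 2*a*b^2 := by
      linear_combination -h1 - a * hp
    have hgt : 4*(ξ₁^2 + x₁^2*ξₙ^2)^3 < 27*(b₀*x₁^3*ξₙ^3)^2 := by
      rw [hp, hq]
      nlinarith [pow_pos hb2 3, sq_nonneg (a^2*b), sq_nonneg (a*b^2), sq_nonneg (a*b), sq_nonneg a]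
    have hw : (x₁*ξₙ)^2 ≤ ξ₁^2 + x₁^2*ξₙ^2 := by nlinarith [sq_nonneg ξ₁]
    have hw3 : ((x₁*ξₙ)^2)^3 ≤ (ξ₁^2 + x₁^2*ξₙ^2)^3 :=
      pow_le_pow_left₀ (sq_nonneg _) hw 3
    have hle : 27*(b₀*x₁^3*ξₙ^3)^2 ≤ 4*(ξ₁^2 + x₁^2*ξₙ^2)^3 := by
      nlinarith [mul_nonneg (sub_nonneg.mpr hb) (pow_nonneg (sq_nonneg (x₁*ξₙ)) 3)]
    linarith
end

section
/- Let b₀ ∈ ℝ with |b₀| < 2/(3√3), and let x₁, ξ₁, ξₙ be real numbers with ξ₁² + x₁²ξₙ² > 0. Then the discriminant 4(ξ₁² + x₁²ξₙ²)³ − 27 b₀² x₁⁶ ξₙ⁶ is strictly positive, and the cubic τ³ − (ξ₁² + x₁²ξₙ²)τ − b₀x₁³ξₙ³ has three distinct real roots (i.e., P is strictly hyperbolic outside the triple manifold Σ₃ = {x₁ = ξ₀ = ξ₁ = 0}). -/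
lemma cubic_three_roots (a q : ℝ) (ha : 0 < a) (hd : 27 * q ^ 2 < 4 * a ^ 3) :
    ∃ τ₁ τ₂ τ₃ : ℝ, τ₁ < τ₂ ∧ τ₂ < τ₃ ∧
      ∀ τ : ℝ, τ ^ 3 - a * τ - q = 0 ↔ (τ = τ₁ ∨ τ = τ₂ ∨ τ = τ₃) := by
  set f : ℝ → ℝ := fun τ => τ ^ 3 - a * τ - q with hf
  have hcont : Continuous f := by fun_prop
  set s := Real.sqrt (a / 3) with hs
  have hs2 : s ^ 2 = a / 3 := Real.sq_sqrt (by linarith)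
  have hs0 : 0 < s := Real.sqrt_pos.mpr (by linarith)
  -- |q| < (2a/3)*s
  have ht2 : (2 * a / 3 * s) ^ 2 = 4 * a ^ 3 / 27 := by
    have : (2 * a / 3 * s) ^ 2 = (4 * a ^ 2 / 9) * s ^ 2 := by ring
    rw [this, hs2]; ring
  have ht0 : 0 < 2 * a / 3 * s := by positivity
  have hqlt : q < 2 * a / 3 * s := by nlinarith [sq_nonneg (q - 2 * a / 3 * s)]
  have hqgt : -(2 * a / 3 * s) < q := by nlinarith [sq_nonneg (q + 2 * a / 3 * s)]
  have hfms : 0 < f (-s) := by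
    have : f (-s) = 2 * a / 3 * s - q := by
      simp only [hf]; nlinarith [hs2]
    rw [this]; linarith
  have hfs : f s < 0 := by
    have : f s = -(2 * a / 3 * s) - q := by
      simp only [hf]; nlinarith [hs2]
    rw [this]; linarith
  set M := a + |q| + 1 with hM
  have hM1 : 1 ≤ M := by have := abs_nonneg q; linarith
  have hsM : s ≤ M := by nlinarith [sq_nonneg (s - 1), abs_nonneg q]
  have hfM : 0 < f M := by
    simp only [hf]
    nlinarith [le_abs_self q, abs_nonneg q, sq_nonneg M]
  have hfmM : f (-M) < 0 := by
    simp only [hf]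
    nlinarith [neg_abs_le q, abs_nonneg q, sq_nonneg M]
  obtain ⟨τ₁, hτ₁mem, hτ₁⟩ := intermediate_value_Icc (by linarith : -M ≤ -s)
    hcont.continuousOn ⟨hfmM.le, hfms.le⟩
  obtain ⟨τ₂, hτ₂mem, hτ₂⟩ := intermediate_value_Icc' (by linarith : -s ≤ s)
    hcont.continuousOn ⟨hfs.le, hfms.le⟩
  obtain ⟨τ₃, hτ₃mem, hτ₃⟩ := intermediate_value_Icc (by linarith : s ≤ M)
    hcont.continuousOn ⟨hfs.le, hfM.le⟩
  have h1s : τ₁ < -s := lt_of_le_of_ne hτ₁mem.2 (by rintro rfl; rw [hτ₁] at hfms; exact lt_irrefl _ hfms)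
  have h2s : -s < τ₂ := lt_of_le_of_ne hτ₂mem.1 (by rintro h; rw [h] at hfms; exact hfms.ne' hτ₂)
  have h2s' : τ₂ < s := lt_of_le_of_ne hτ₂mem.2 (by rintro rfl; rw [hτ₂] at hfs; exact lt_irrefl _ hfs)
  have h3s : s < τ₃ := lt_of_le_of_ne hτ₃mem.1 (by rintro h; rw [h] at hfs; exact hfs.ne hτ₃)
  have h12 : τ₁ < τ₂ := by linarith
  have h23 : τ₂ < τ₃ := by linarith
  have e1 : τ₁ ^ 3 - a * τ₁ - q = 0 := hτ₁
  have e2 : τ₂ ^ 3 - a * τ₂ - q = 0 := hτ₂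
  have e3 : τ₃ ^ 3 - a * τ₃ - q = 0 := hτ₃
  have hne12 : τ₁ - τ₂ ≠ 0 := sub_ne_zero.mpr h12.ne
  have hne13 : τ₁ - τ₃ ≠ 0 := sub_ne_zero.mpr (h12.trans h23).ne
  have hne23 : τ₂ - τ₃ ≠ 0 := sub_ne_zero.mpr h23.ne
  have key12 : (τ₁ - τ₂) * (τ₁ ^ 2 + τ₁ * τ₂ + τ₂ ^ 2 - a) = 0 := by linear_combination e1 - e2
  have key13 : (τ₁ - τ₃) * (τ₁ ^ 2 + τ₁ * τ₃ + τ₃ ^ 2 - a) = 0 := by linear_combination e1 - e3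
  have p12 : τ₁ ^ 2 + τ₁ * τ₂ + τ₂ ^ 2 = a := by
    rcases mul_eq_zero.mp key12 with h' | h'
    · exact absurd h' hne12
    · linarith
  have p13 : τ₁ ^ 2 + τ₁ * τ₃ + τ₃ ^ 2 = a := by
    rcases mul_eq_zero.mp key13 with h' | h'
    · exact absurd h' hne13
    · linarith
  have keysum : (τ₂ - τ₃) * (τ₁ + τ₂ + τ₃) = 0 := by linear_combination p12 - p13
  have hsum : τ₁ + τ₂ + τ₃ = 0 := by
    rcases mul_eq_zero.mp keysum with h' | h'
    · exact absurd h' hne23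
    · exact h'
  have hfact : ∀ τ : ℝ, τ ^ 3 - a * τ - q = (τ - τ₁) * (τ - τ₂) * (τ - τ₃) := by
    intro τ
    linear_combination (τ ^ 2 - τ * (τ₁ + τ₂) + τ₁ * τ₂) * hsum + (τ - τ₁) * p12 + e1
  refine ⟨τ₁, τ₂, τ₃, h12, h23, fun τ => ?_⟩
  rw [hfact τ]
  simp [mul_eq_zero, sub_eq_zero, or_assoc]

/-- Strict hyperbolicity outside the triple manifold: if `|b₀| < 2/(3√3)` and
`ξ₁² + x₁²ξₙ² > 0`, then the discriminant of the cubic `τ³ − (ξ₁² + x₁²ξₙ²)τ − b₀x₁³ξₙ³`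
is strictly positive and the cubic has three distinct real roots. -/
theorem strictly_hyperbolic_outside_triple_manifold (b₀ : ℝ)
    (hb₀ : |b₀| < 2 / (3 * Real.sqrt 3))
    (x₁ ξ₁ ξₙ : ℝ) (h : 0 < ξ₁ ^ 2 + x₁ ^ 2 * ξₙ ^ 2) :
    0 < 4 * (ξ₁ ^ 2 + x₁ ^ 2 * ξₙ ^ 2) ^ 3 - 27 * b₀ ^ 2 * x₁ ^ 6 * ξₙ ^ 6 ∧
    ∃ τ₁ τ₂ τ₃ : ℝ, τ₁ < τ₂ ∧ τ₂ < τ₃ ∧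
      ∀ τ : ℝ,
        τ ^ 3 - (ξ₁ ^ 2 + x₁ ^ 2 * ξₙ ^ 2) * τ - b₀ * x₁ ^ 3 * ξₙ ^ 3 = 0 ↔
          (τ = τ₁ ∨ τ = τ₂ ∨ τ = τ₃) := by
  set a := ξ₁ ^ 2 + x₁ ^ 2 * ξₙ ^ 2 with ha
  set q := b₀ * x₁ ^ 3 * ξₙ ^ 3 with hq
  have hs3 : Real.sqrt 3 ^ 2 = 3 := Real.sq_sqrt (by norm_num)
  have hs3p : (0 : ℝ) < Real.sqrt 3 := Real.sqrt_pos.mpr (by norm_num)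
  have hb2 : b₀ ^ 2 < 4 / 27 := by
    have h1 : |b₀| * (3 * Real.sqrt 3) < 2 := by
      rwa [lt_div_iff₀ (by positivity)] at hb₀
    nlinarith [abs_nonneg b₀, sq_abs b₀]
  have hm : x₁ ^ 2 * ξₙ ^ 2 ≤ a := by nlinarith [sq_nonneg ξ₁]
  have hm0 : (0 : ℝ) ≤ x₁ ^ 2 * ξₙ ^ 2 := by positivity
  have hm3 : (x₁ ^ 2 * ξₙ ^ 2) ^ 3 ≤ a ^ 3 := pow_le_pow_left₀ hm0 hm 3
  have hd : 27 * q ^ 2 < 4 * a ^ 3 := by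
    have hq2 : q ^ 2 = b₀ ^ 2 * (x₁ ^ 2 * ξₙ ^ 2) ^ 3 := by rw [hq]; ring
    nlinarith [sq_nonneg b₀, pow_pos h 3]
  constructor
  · have : 27 * b₀ ^ 2 * x₁ ^ 6 * ξₙ ^ 6 = 27 * q ^ 2 := by rw [hq]; ring
    linarith [hd, this.ge]
  · exact cubic_three_roots a q h hd
end

section
/- Let a > 0 and μ > 0, and let f : ℝ → ℂ be smooth and compactly supported. Then ∫₀^∞ e^{2μ(x₀−a)} |f′(x₀)|² dx₀ ≥ μ e^{−2μa} |f(0)|² + μ² ∫₀^∞ e^{2μ(x₀−a)} |f(x₀)|² dx₀. -/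
open MeasureTheory

open scoped RealInnerProductSpace in
/-- The scalar weighted estimate used in the proof of Lemma 2.1: for `a, μ > 0` and a
smooth compactly supported `f : ℝ → ℂ`,
`∫₀^∞ e^{2μ(x₀−a)} |f′(x₀)|² dx₀ ≥ μ e^{−2μa} |f(0)|² + μ² ∫₀^∞ e^{2μ(x₀−a)} |f(x₀)|² dx₀`. -/
theorem scalar_weighted_estimate (a μ : ℝ) (ha : 0 < a) (hμ : 0 < μ)
    (f : ℝ → ℂ) (hf : ContDiff ℝ (⊤ : ℕ∞) f) (hc : HasCompactSupport f) :
    (∫ x₀ in Set.Ioi (0:ℝ), Real.exp (2 * μ * (x₀ - a)) * ‖deriv f x₀‖ ^ 2)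
      ≥ μ * Real.exp (-2 * μ * a) * ‖f 0‖ ^ 2
        + μ ^ 2 * ∫ x₀ in Set.Ioi (0:ℝ), Real.exp (2 * μ * (x₀ - a)) * ‖f x₀‖ ^ 2 := by
  set W : ℝ → ℝ := fun x => Real.exp (2 * μ * (x - a)) with hW
  have hfd : Differentiable ℝ f := hf.differentiable (by simp)
  have hf' : Continuous (deriv f) := (hf.continuous_deriv (by exact_mod_cast le_top))
  have hcW : Continuous W := by fun_prop
  have hcf : Continuous f := hf.continuous
  have hc' : HasCompactSupport (deriv f) := hc.deriv
  -- the weight function g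
  set g : ℝ → ℝ := fun x => W x * ‖f x‖ ^ 2 with hg
  set g' : ℝ → ℝ := fun x => 2 * μ * W x * ‖f x‖ ^ 2 + W x * (2 * ⟪f x, deriv f x⟫) with hg'
  have hWd : ∀ x : ℝ, HasDerivAt W (2 * μ * W x) x := by
    intro x
    have h1 : HasDerivAt (fun x : ℝ => 2 * μ * (x - a)) (2 * μ) x := by
      simpa using ((hasDerivAt_id x).sub_const a).const_mul (2 * μ)
    exact h1.exp.congr_deriv (mul_comm _ _)
  have hNd : ∀ x : ℝ, HasDerivAt (fun x => ‖f x‖ ^ 2) (2 * ⟪f x, deriv f x⟫) x := by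
    intro x
    have h1 := ((hfd x).hasDerivAt).inner ℝ ((hfd x).hasDerivAt)
    have h2 : (fun y => (⟪f y, f y⟫ : ℝ)) = fun y => ‖f y‖ ^ 2 :=
      funext fun y => real_inner_self_eq_norm_sq (f y)
    have h3 : HasDerivAt (fun y => (⟪f y, f y⟫ : ℝ)) (2 * ⟪f x, deriv f x⟫) x :=
      h1.congr_deriv (by rw [real_inner_comm (deriv f x) (f x)]; ring)
    exact h2 ▸ h3
  have hgd : ∀ x : ℝ, HasDerivAt g (g' x) x := by
    intro x
    exact (hWd x).mul (hNd x)
  -- compact support of everything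
  have hsupp : ∀ x : ℝ, f x = 0 → g x = 0 := by intro x hx; simp [hg, hx]
  have hgc : HasCompactSupport g :=
    HasCompactSupport.mono hc (by intro x hx; exact fun h => hx (hsupp x h))
  have hg'c : HasCompactSupport g' := by
    apply HasCompactSupport.mono hc
    intro x hx
    contrapose! hx
    simp only [Function.mem_support, not_not] at hx ⊢
    simp [hg', hx]
  -- integrabilities
  have hint1 : IntegrableOn (fun x => W x * ‖deriv f x‖ ^ 2) (Set.Ioi (0:ℝ)) := by
    apply Integrable.integrableOn
    apply Continuous.integrable_of_hasCompactSupport (by fun_prop)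
    apply HasCompactSupport.mono hc'
    intro x hx
    contrapose! hx
    simp only [Function.mem_support, not_not] at hx ⊢
    simp [hx]
  have hint2 : IntegrableOn (fun x => W x * ‖f x‖ ^ 2) (Set.Ioi (0:ℝ)) := by
    apply Integrable.integrableOn
    apply Continuous.integrable_of_hasCompactSupport (by fun_prop)
    apply HasCompactSupport.mono hc
    intro x hx
    contrapose! hx
    simp only [Function.mem_support, not_not] at hx ⊢
    simp [hx]
  have hint3 : IntegrableOn g' (Set.Ioi (0:ℝ)) := by
    apply Integrable.integrableOn
    apply Continuous.integrable_of_hasCompactSupport ?_ hg'c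
    have : Continuous fun x => (⟪f x, deriv f x⟫ : ℝ) := hcf.inner hf'
    fun_prop
  -- g tends to 0 at +∞
  have hgtop : Filter.Tendsto g Filter.atTop (nhds 0) := by
    obtain ⟨R, hR⟩ := hgc.isCompact.bddAbove
    apply Filter.Tendsto.congr' _ tendsto_const_nhds
    filter_upwards [Filter.eventually_gt_atTop R] with x hx
    symm
    apply image_eq_zero_of_notMem_tsupport
    intro hmem
    exact absurd (hR hmem) (not_le.mpr hx)
  -- FTC on (0, ∞)
  have hFTC : (∫ x in Set.Ioi (0:ℝ), g' x) = - g 0 := by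
    rw [integral_Ioi_of_hasDerivAt_of_tendsto' (fun x _ => hgd x) hint3 hgtop]
    simp
  -- pointwise estimate
  have hpt : ∀ x ∈ Set.Ioi (0:ℝ),
      μ ^ 2 * (W x * ‖f x‖ ^ 2) - μ * g' x ≤ W x * ‖deriv f x‖ ^ 2 := by
    intro x _
    have hkey : 0 ≤ W x * ‖deriv f x + μ • f x‖ ^ 2 :=
      mul_nonneg (Real.exp_pos _).le (sq_nonneg _)
    have hexp : ‖deriv f x + μ • f x‖ ^ 2
        = ‖deriv f x‖ ^ 2 + 2 * (μ * ⟪f x, deriv f x⟫) + μ ^ 2 * ‖f x‖ ^ 2 := by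
      rw [norm_add_sq_real, real_inner_smul_right, norm_smul, real_inner_comm]
      simp [mul_pow, abs_of_pos hμ]
    rw [hexp] at hkey
    simp only [hg']
    nlinarith [hkey]
  -- combine
  have hmono : (∫ x in Set.Ioi (0:ℝ), (μ ^ 2 * (W x * ‖f x‖ ^ 2) - μ * g' x))
      ≤ ∫ x in Set.Ioi (0:ℝ), W x * ‖deriv f x‖ ^ 2 := by
    apply setIntegral_mono_on _ hint1 measurableSet_Ioi hpt
    exact ((hint2.const_mul _).sub (hint3.const_mul _))
  have hsplit : (∫ x in Set.Ioi (0:ℝ), (μ ^ 2 * (W x * ‖f x‖ ^ 2) - μ * g' x))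
      = μ ^ 2 * (∫ x in Set.Ioi (0:ℝ), W x * ‖f x‖ ^ 2) + μ * g 0 := by
    rw [integral_sub (hint2.const_mul _) (hint3.const_mul _),
      integral_const_mul, integral_const_mul, hFTC]
    ring
  have hg0 : g 0 = Real.exp (-2 * μ * a) * ‖f 0‖ ^ 2 := by
    simp only [hg, hW]
    ring_nf
  rw [hsplit, hg0] at hmono
  simp only [ge_iff_le, hW]
  linarith [hmono]
end

section
/- Let θ > 0, a > 0, τ > 0, s ≥ 1, ξₙ ∈ ℝ, and set Mu = D₀²u − θ(D₁²u + x₁²ξₙ²u) and E(u(x₀)) = ‖D₀u(x₀)‖² + θ‖D₁u(x₀)‖² + θ‖x₁ξₙ u(x₀)‖². Then for every smooth compactly supported u : ℝ² → ℂ, 2∫₀^∞ W(x₀) Im⟨Mu(x₀), D₀u(x₀)⟩ dx₀ = W(0) E(u(0)) + 2τ⟨ξₙ⟩^{1/s} ∫₀^∞ W(x₀) E(u(x₀)) dx₀. -/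
open Complex MeasureTheory

/-- `D₀ = -i ∂/∂x₀` on functions of `(x₀, x₁) ∈ ℝ²`. -/
noncomputable def D0 (u : ℝ × ℝ → ℂ) : ℝ × ℝ → ℂ :=
  fun p => -Complex.I * fderiv ℝ u p (1, 0)

/-- `D₁ = -i ∂/∂x₁` on functions of `(x₀, x₁) ∈ ℝ²`. -/
noncomputable def D1 (u : ℝ × ℝ → ℂ) : ℝ × ℝ → ℂ :=
  fun p => -Complex.I * fderiv ℝ u p (0, 1)

/-- `‖v(x₀)‖² = ∫ |v(x₀, x₁)|² dx₁`. -/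
noncomputable def nsq (v : ℝ × ℝ → ℂ) (x₀ : ℝ) : ℝ :=
  ∫ x₁ : ℝ, ‖v (x₀, x₁)‖ ^ 2

/-- `⟨v(x₀), w(x₀)⟩ = ∫ v(x₀,x₁) conj(w(x₀,x₁)) dx₁`. -/
noncomputable def pair2 (v w : ℝ × ℝ → ℂ) (x₀ : ℝ) : ℂ :=
  ∫ x₁ : ℝ, v (x₀, x₁) * (starRingEnd ℂ) (w (x₀, x₁))

/-- The Gevrey weight `W(x₀) = exp(2τ⟨ξₙ⟩^{1/s}(x₀ − a))`, where `⟨ξₙ⟩ = √(1+ξₙ²)`. -/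
noncomputable def Wt (τ ξₙ s a : ℝ) (x₀ : ℝ) : ℝ :=
  Real.exp (2 * τ * (Real.sqrt (1 + ξₙ ^ 2)) ^ (1 / s) * (x₀ - a))

/-- The multiplier `M u = D₀²u − θ(D₁²u + x₁²ξₙ²u)`. -/
noncomputable def Mop (θ ξₙ : ℝ) (u : ℝ × ℝ → ℂ) : ℝ × ℝ → ℂ :=
  fun p => D0 (D0 u) p - (θ : ℂ) * (D1 (D1 u) p + (↑(p.2 ^ 2 * ξₙ ^ 2) : ℂ) * u p)

/-- `E(u(x₀)) = ‖D₀u(x₀)‖² + θ‖D₁u(x₀)‖² + θ‖x₁ξₙ u(x₀)‖²`. -/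
noncomputable def En (θ ξₙ : ℝ) (u : ℝ × ℝ → ℂ) (x₀ : ℝ) : ℝ :=
  nsq (D0 u) x₀ + θ * nsq (D1 u) x₀ + θ * nsq (fun p => (↑(p.2 * ξₙ) : ℂ) * u p) x₀


open Set

namespace WEI

lemma hasDerivAt_slice_fst {v : ℝ × ℝ → ℂ} (hv : Differentiable ℝ v) (x y : ℝ) :
    HasDerivAt (fun x' => v (x', y)) (fderiv ℝ v (x, y) (1, 0)) x := by
  have h1 : HasDerivAt (fun x' : ℝ => ((x', y) : ℝ × ℝ)) ((1:ℝ), (0:ℝ)) x :=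
    (hasDerivAt_id x).prodMk (hasDerivAt_const x y)
  exact (hv (x, y)).hasFDerivAt.comp_hasDerivAt x h1

lemma hasDerivAt_slice_snd {v : ℝ × ℝ → ℂ} (hv : Differentiable ℝ v) (x y : ℝ) :
    HasDerivAt (fun y' => v (x, y')) (fderiv ℝ v (x, y) (0, 1)) y := by
  have h1 : HasDerivAt (fun y' : ℝ => ((x, y') : ℝ × ℝ)) ((0:ℝ), (1:ℝ)) y :=
    (hasDerivAt_const y x).prodMk (hasDerivAt_id y)
  exact (hv (x, y)).hasFDerivAt.comp_hasDerivAt y h1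

lemma hasDerivAt_re {V : ℝ → ℂ} {V' : ℂ} {x : ℝ} (hV : HasDerivAt V V' x) :
    HasDerivAt (fun t => (V t).re) V'.re x :=
  Complex.reCLM.hasFDerivAt.comp_hasDerivAt x hV

lemma hasDerivAt_im {V : ℝ → ℂ} {V' : ℂ} {x : ℝ} (hV : HasDerivAt V V' x) :
    HasDerivAt (fun t => (V t).im) V'.im x :=
  Complex.imCLM.hasFDerivAt.comp_hasDerivAt x hV

lemma hasDerivAt_norm_sq_comp {V : ℝ → ℂ} {V' : ℂ} {x : ℝ} (hV : HasDerivAt V V' x) :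
    HasDerivAt (fun t => ‖V t‖ ^ 2) (2 * (V' * (starRingEnd ℂ) (V x)).re) x := by
  have h := ((hasDerivAt_re hV).mul (hasDerivAt_re hV)).add
    ((hasDerivAt_im hV).mul (hasDerivAt_im hV))
  have heq : (fun t => ‖V t‖ ^ 2) = fun t => (V t).re * (V t).re + (V t).im * (V t).im := by
    funext t
    simp [Complex.sq_norm, Complex.normSq_apply]
  rw [heq]
  refine h.congr_deriv ?_
  simp [Complex.mul_re]
  ring

lemma integrable_of_support_Icc {E : Type*} [NormedAddCommGroup E] {f : ℝ → E} {R : ℝ}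
    (hf : Continuous f) (h : ∀ y, y ∉ Icc (-R) R → f y = 0) : Integrable f := by
  apply hf.integrable_of_hasCompactSupport
  exact HasCompactSupport.intro isCompact_Icc h

lemma mixed_symm {u : ℝ × ℝ → ℂ} (hu : ContDiff ℝ (⊤:ℕ∞) u) (p : ℝ × ℝ) :
    fderiv ℝ (fun q => fderiv ℝ u q (0,1)) p (1,0)
      = fderiv ℝ (fun q => fderiv ℝ u q (1,0)) p (0,1) := by
  have hdu : Differentiable ℝ u := hu.differentiable (by simp)
  have hd2 : Differentiable ℝ (fderiv ℝ u) := (hu.fderiv_right (m := (⊤:ℕ∞)) (by exact_mod_cast le_top)).differentiable (by simp)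
  have hsym := second_derivative_symmetric (f := u) (f' := fderiv ℝ u)
    (f'' := fderiv ℝ (fderiv ℝ u) p) (fun y => (hdu y).hasFDerivAt) (hd2 p).hasFDerivAt
  have h1 : ∀ c : ℝ × ℝ, fderiv ℝ (fun q => fderiv ℝ u q c) p
      = (fderiv ℝ (fderiv ℝ u) p).flip c := by
    intro c
    rw [fderiv_clm_apply (hd2 p) (differentiableAt_const c)]
    simp
  rw [h1, h1]
  exact hsym _ _

lemma contDiff_fderiv_apply {u : ℝ × ℝ → ℂ} (hu : ContDiff ℝ (⊤:ℕ∞) u) (c : ℝ × ℝ) :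
    ContDiff ℝ (⊤:ℕ∞) (fun q => fderiv ℝ u q c) :=
  (ContinuousLinearMap.apply ℝ ℂ c).contDiff.comp (hu.fderiv_right (m := (⊤:ℕ∞)) (by exact_mod_cast le_top))


lemma param_hasDerivAt {f g : ℝ × ℝ → ℝ} (hf : Continuous f) (hg : Continuous g) {R : ℝ}
    (hfz : ∀ p : ℝ × ℝ, p ∉ Icc (-R) R ×ˢ Icc (-R) R → f p = 0)
    (hgz : ∀ p : ℝ × ℝ, p ∉ Icc (-R) R ×ˢ Icc (-R) R → g p = 0)
    (hd : ∀ x y : ℝ, HasDerivAt (fun x' => f (x', y)) (g (x, y)) x) (x₀ : ℝ) :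
    HasDerivAt (fun x => ∫ y : ℝ, f (x, y)) (∫ y : ℝ, g (x₀, y)) x₀ := by
  obtain ⟨C, hC⟩ : ∃ C, ∀ p, ‖g p‖ ≤ C :=
    (HasCompactSupport.intro (isCompact_Icc.prod isCompact_Icc) hgz).exists_bound_of_continuous hg
  have hslice : ∀ x : ℝ, Continuous fun y => f (x, y) :=
    fun x => hf.comp (continuous_const.prodMk continuous_id)
  have hgslice : ∀ x : ℝ, Continuous fun y => g (x, y) :=
    fun x => hg.comp (continuous_const.prodMk continuous_id)
  have hmem : ∀ x y : ℝ, y ∉ Icc (-R) R → ((x, y) : ℝ × ℝ) ∉ Icc (-R) R ×ˢ Icc (-R) R :=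
    fun x y hy hmem => hy hmem.2
  have key := hasDerivAt_integral_of_dominated_loc_of_deriv_le (μ := volume)
    (F := fun x y => f (x, y)) (F' := fun x y => g (x, y)) (x₀ := x₀)
    (bound := (Icc (-R) R).indicator fun _ => C) (Metric.ball_mem_nhds x₀ one_pos)
    (Filter.Eventually.of_forall fun x => (hslice x).aestronglyMeasurable)
    (integrable_of_support_Icc (hslice x₀) fun y hy => hfz _ (hmem _ _ hy))
    (hgslice x₀).aestronglyMeasurable
    (Filter.Eventually.of_forall ?_)
    ?_
    (Filter.Eventually.of_forall fun y x _ => hd x y)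
  · exact key.2
  · intro y x _
    by_cases hy : y ∈ Icc (-R) R
    · rw [Set.indicator_of_mem hy]; exact hC _
    · rw [Set.indicator_of_notMem hy]
      have := hgz _ (hmem x y hy)
      simp only [this, norm_zero, le_refl]
  · rw [integrable_indicator_iff measurableSet_Icc]
    exact integrableOn_const measure_Icc_lt_top.ne

lemma integral_deriv_zero {φ dφ : ℝ → ℝ} {R : ℝ}
    (hdφ : Continuous dφ)
    (hφz : ∀ y, y ∉ Icc (-R) R → φ y = 0)
    (hdz : ∀ y, y ∉ Icc (-R) R → dφ y = 0)
    (hd : ∀ y, HasDerivAt φ (dφ y) y) :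
    ∫ y : ℝ, dφ y = 0 := by
  have hR1 : R ≤ |R| := le_abs_self R
  have hR2 : -|R| ≤ R := neg_abs_le R
  set S : ℝ := |R| + 1 with hS
  have hSS : -S ≤ S := by dsimp [S]; linarith [abs_nonneg R]
  have h0 : ∀ y, y ∉ Icc (-S) S → dφ y = 0 := by
    intro y hy
    refine hdz y fun hm => hy ?_
    exact ⟨by dsimp [S]; linarith [hm.1], by dsimp [S]; linarith [hm.2]⟩
  calc ∫ y : ℝ, dφ y = ∫ y in Icc (-S) S, dφ y :=
        (setIntegral_eq_integral_of_forall_compl_eq_zero h0).symm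
    _ = ∫ y in Ioc (-S) S, dφ y := integral_Icc_eq_integral_Ioc
    _ = ∫ y in (-S)..S, dφ y := (intervalIntegral.integral_of_le hSS).symm
    _ = φ S - φ (-S) :=
        intervalIntegral.integral_eq_sub_of_hasDerivAt (fun y _ => hd y)
          (hdφ.intervalIntegrable _ _)
    _ = 0 := by
        rw [hφz S (fun hm => by have := hm.2; dsimp [S] at this; linarith),
          hφz (-S) (fun hm => by have := hm.1; dsimp [S] at this; linarith)]
        ring

end WEI

/-- The energy identity (2.24)–(2.25):
`2∫₀^∞ W Im⟨Mu, D₀u⟩ dx₀ = W(0)E(u(0)) + 2τ⟨ξₙ⟩^{1/s} ∫₀^∞ W E(u(x₀)) dx₀`. -/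
theorem weighted_energy_identity (θ a τ s ξₙ : ℝ)
    (hθ : 0 < θ) (ha : 0 < a) (hτ : 0 < τ) (hs : 1 ≤ s)
    (u : ℝ × ℝ → ℂ) (hu : ContDiff ℝ (⊤ : ℕ∞) u) (hc : HasCompactSupport u) :
    2 * ∫ x₀ in Set.Ioi (0:ℝ), Wt τ ξₙ s a x₀ * (pair2 (Mop θ ξₙ u) (D0 u) x₀).im
      = Wt τ ξₙ s a 0 * En θ ξₙ u 0
        + 2 * τ * (Real.sqrt (1 + ξₙ ^ 2)) ^ (1 / s)
          * ∫ x₀ in Set.Ioi (0:ℝ), Wt τ ξₙ s a x₀ * En θ ξₙ u x₀ := by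
  classical
  -- basic differentiability / smoothness
  have hdu : Differentiable ℝ u := hu.differentiable (by simp)
  have hcu : Continuous u := hu.continuous
  have hcd0 : ContDiff ℝ (⊤:ℕ∞) (D0 u) := contDiff_const.mul (WEI.contDiff_fderiv_apply hu (1,0))
  have hcd1 : ContDiff ℝ (⊤:ℕ∞) (D1 u) := contDiff_const.mul (WEI.contDiff_fderiv_apply hu (0,1))
  have hd0 : Differentiable ℝ (D0 u) := hcd0.differentiable (by simp)
  have hd1 : Differentiable ℝ (D1 u) := hcd1.differentiable (by simp)
  have hcv0 : Continuous (D0 u) := hcd0.continuous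
  have hcv1 : Continuous (D1 u) := hcd1.continuous
  have hcpdu : Continuous fun p => fderiv ℝ u p (1,0) :=
    (WEI.contDiff_fderiv_apply hu (1,0)).continuous
  have hcpd00 : Continuous fun p => fderiv ℝ (D0 u) p (1,0) :=
    (WEI.contDiff_fderiv_apply hcd0 (1,0)).continuous
  have hcpd01 : Continuous fun p => fderiv ℝ (D0 u) p (0,1) :=
    (WEI.contDiff_fderiv_apply hcd0 (0,1)).continuous
  have hcpd10 : Continuous fun p => fderiv ℝ (D1 u) p (1,0) :=
    (WEI.contDiff_fderiv_apply hcd1 (1,0)).continuous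
  have hcpd11 : Continuous fun p => fderiv ℝ (D1 u) p (0,1) :=
    (WEI.contDiff_fderiv_apply hcd1 (0,1)).continuous
  -- support box
  obtain ⟨r, hr0, hsub⟩ := hc.isBounded.subset_closedBall_lt 0 0
  have hbox : tsupport u ⊆ Icc (-r) r ×ˢ Icc (-r) r := by
    intro p hp
    have h := hsub hp
    rw [← closedBall_prod_same] at h
    simpa [Real.closedBall_eq_Icc] using h
  -- vanishing facts
  have hz_u : ∀ p, p ∉ tsupport u → u p = 0 := fun p hp => image_eq_zero_of_notMem_tsupport hp
  have hz_fu : ∀ p, p ∉ tsupport u → fderiv ℝ u p = 0 := by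
    intro p hp
    by_contra h
    exact hp (support_fderiv_subset (𝕜 := ℝ) h)
  have hz_v0 : ∀ p, p ∉ tsupport u → D0 u p = 0 := by
    intro p hp; simp [D0, hz_fu p hp]
  have hz_v1 : ∀ p, p ∉ tsupport u → D1 u p = 0 := by
    intro p hp; simp [D1, hz_fu p hp]
  have hts0 : tsupport (D0 u) ⊆ tsupport u :=
    closure_minimal (fun p hp => by
      by_contra hq
      exact Function.mem_support.mp hp (hz_v0 p hq)) (isClosed_tsupport u)
  have hts1 : tsupport (D1 u) ⊆ tsupport u :=
    closure_minimal (fun p hp => by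
      by_contra hq
      exact Function.mem_support.mp hp (hz_v1 p hq)) (isClosed_tsupport u)
  have hz_fv0 : ∀ p, p ∉ tsupport u → fderiv ℝ (D0 u) p = 0 := by
    intro p hp
    by_contra h
    exact hp (hts0 (support_fderiv_subset (𝕜 := ℝ) h))
  have hz_fv1 : ∀ p, p ∉ tsupport u → fderiv ℝ (D1 u) p = 0 := by
    intro p hp
    by_contra h
    exact hp (hts1 (support_fderiv_subset (𝕜 := ℝ) h))
  have hnot : ∀ p : ℝ × ℝ, p ∉ Icc (-r) r ×ˢ Icc (-r) r → p ∉ tsupport u :=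
    fun p hp hm => hp (hbox hm)
  -- the integrand functions
  set g0 : ℝ × ℝ → ℝ :=
    fun p => 2 * ((fderiv ℝ (D0 u) p (1,0)) * (starRingEnd ℂ) (D0 u p)).re with hg0def
  set g1 : ℝ × ℝ → ℝ :=
    fun p => 2 * ((fderiv ℝ (D1 u) p (1,0)) * (starRingEnd ℂ) (D1 u p)).re with hg1def
  set g2 : ℝ × ℝ → ℝ :=
    fun p => (p.2 * ξₙ)^2 * (2 * ((fderiv ℝ u p (1,0)) * (starRingEnd ℂ) (u p)).re) with hg2def
  set mm : ℝ × ℝ → ℝ :=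
    fun p => ((Mop θ ξₙ u p) * (starRingEnd ℂ) (D0 u p)).im with hmmdef
  set ψ : ℝ × ℝ → ℝ :=
    fun p => ((fderiv ℝ (D0 u) p (0,1)) * (starRingEnd ℂ) (D1 u p)
      + (D0 u p) * (starRingEnd ℂ) (fderiv ℝ (D1 u) p (0,1))).re with hψdef
  -- continuity
  have hconj : Continuous (starRingEnd ℂ) := Complex.continuous_conj
  have hcg0 : Continuous g0 :=
    continuous_const.mul (Complex.continuous_re.comp (hcpd00.mul (hconj.comp hcv0)))
  have hcg1 : Continuous g1 :=
    continuous_const.mul (Complex.continuous_re.comp (hcpd10.mul (hconj.comp hcv1)))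
  have hcg2 : Continuous g2 :=
    ((continuous_snd.mul continuous_const).pow 2).mul
      (continuous_const.mul (Complex.continuous_re.comp (hcpdu.mul (hconj.comp hcu))))
  have hcM : Continuous (Mop θ ξₙ u) := by
    apply Continuous.sub
    · exact continuous_const.mul hcpd00
    · apply continuous_const.mul
      apply Continuous.add
      · exact continuous_const.mul hcpd11
      · exact (Complex.continuous_ofReal.comp ((continuous_snd.pow 2).mul continuous_const)).mul hcu
  have hcmm : Continuous mm := Complex.continuous_im.comp (hcM.mul (hconj.comp hcv0))
  have hcψ : Continuous ψ := Complex.continuous_re.comp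
    ((hcpd01.mul (hconj.comp hcv1)).add (hcv0.mul (hconj.comp hcpd11)))
  -- vanishing off the box
  have hMz : ∀ p, p ∉ tsupport u → Mop θ ξₙ u p = 0 := by
    intro p hp
    simp [Mop, D0, D1, hz_fv0 p hp, hz_fv1 p hp, hz_u p hp]
  have hg0z : ∀ p : ℝ × ℝ, p ∉ Icc (-r) r ×ˢ Icc (-r) r → g0 p = 0 := by
    intro p hp; simp [hg0def, hz_fv0 p (hnot p hp)]
  have hg1z : ∀ p : ℝ × ℝ, p ∉ Icc (-r) r ×ˢ Icc (-r) r → g1 p = 0 := by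
    intro p hp; simp [hg1def, hz_fv1 p (hnot p hp)]
  have hg2z : ∀ p : ℝ × ℝ, p ∉ Icc (-r) r ×ˢ Icc (-r) r → g2 p = 0 := by
    intro p hp; simp [hg2def, hz_u p (hnot p hp)]
  have hmmz : ∀ p : ℝ × ℝ, p ∉ Icc (-r) r ×ˢ Icc (-r) r → mm p = 0 := by
    intro p hp; simp [hmmdef, hMz p (hnot p hp)]
  have hψz : ∀ p : ℝ × ℝ, p ∉ Icc (-r) r ×ˢ Icc (-r) r → ψ p = 0 := by
    intro p hp; simp [hψdef, hz_v0 p (hnot p hp), hz_fv0 p (hnot p hp), hz_v1 p (hnot p hp)]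
  have hmem : ∀ (x y : ℝ), y ∉ Icc (-r) r → ((x, y) : ℝ × ℝ) ∉ Icc (-r) r ×ˢ Icc (-r) r :=
    fun x y hy hm => hy hm.2
  have hmem1 : ∀ (x y : ℝ), x ∉ Icc (-r) r → ((x, y) : ℝ × ℝ) ∉ Icc (-r) r ×ˢ Icc (-r) r :=
    fun x y hx hm => hx hm.1
  -- derivative of the three pieces of the energy
  have hA0 : ∀ x, HasDerivAt (nsq (D0 u)) (∫ y : ℝ, g0 (x, y)) x := by
    intro x
    exact WEI.param_hasDerivAt (f := fun p => ‖D0 u p‖^2) (g := g0)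
      (hcv0.norm.pow 2) hcg0
      (fun p hp => by simp [hz_v0 p (hnot p hp)]) hg0z
      (fun x y => WEI.hasDerivAt_norm_sq_comp (WEI.hasDerivAt_slice_fst hd0 x y)) x
  have hA1 : ∀ x, HasDerivAt (nsq (D1 u)) (∫ y : ℝ, g1 (x, y)) x := by
    intro x
    exact WEI.param_hasDerivAt (f := fun p => ‖D1 u p‖^2) (g := g1)
      (hcv1.norm.pow 2) hcg1
      (fun p hp => by simp [hz_v1 p (hnot p hp)]) hg1z
      (fun x y => WEI.hasDerivAt_norm_sq_comp (WEI.hasDerivAt_slice_fst hd1 x y)) x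
  have hA2 : ∀ x, HasDerivAt (nsq (fun p => (↑(p.2 * ξₙ) : ℂ) * u p)) (∫ y : ℝ, g2 (x, y)) x := by
    intro x
    apply WEI.param_hasDerivAt (f := fun p => ‖(↑(p.2 * ξₙ) : ℂ) * u p‖^2) (g := g2)
      (((Complex.continuous_ofReal.comp (continuous_snd.mul continuous_const)).mul hcu).norm.pow 2)
      hcg2 (fun p hp => by simp [hz_u p (hnot p hp)]) hg2z
    intro x' y
    have h1 := (WEI.hasDerivAt_norm_sq_comp (WEI.hasDerivAt_slice_fst hdu x' y)).const_mul
      ((y * ξₙ)^2)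
    have heq : (fun x'' : ℝ => ‖(↑(y * ξₙ) : ℂ) * u (x'', y)‖^2)
        = fun x'' => (y * ξₙ)^2 * ‖u (x'', y)‖^2 := by
      funext t
      rw [norm_mul, mul_pow]
      congr 1
      rw [Complex.norm_real, Real.norm_eq_abs, _root_.sq_abs]
    rw [heq]
    exact h1
  -- symmetry of mixed partials
  have hmix : ∀ p : ℝ × ℝ, fderiv ℝ (D1 u) p (1,0) = fderiv ℝ (D0 u) p (0,1) := by
    intro p
    have hdiff01 : DifferentiableAt ℝ (fun q => fderiv ℝ u q (0,1)) p :=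
      ((WEI.contDiff_fderiv_apply hu (0,1)).differentiable (by simp)) p
    have hdiff10 : DifferentiableAt ℝ (fun q => fderiv ℝ u q (1,0)) p :=
      ((WEI.contDiff_fderiv_apply hu (1,0)).differentiable (by simp)) p
    have e1 : fderiv ℝ (D1 u) p
        = (-Complex.I) • fderiv ℝ (fun q => fderiv ℝ u q (0,1)) p := by
      rw [show D1 u = fun q => -Complex.I * fderiv ℝ u q (0,1) from rfl]
      rw [fderiv_const_mul hdiff01]
    have e2 : fderiv ℝ (D0 u) p
        = (-Complex.I) • fderiv ℝ (fun q => fderiv ℝ u q (1,0)) p := by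
      rw [show D0 u = fun q => -Complex.I * fderiv ℝ u q (1,0) from rfl]
      rw [fderiv_const_mul hdiff10]
    rw [e1, e2]
    simp [WEI.mixed_symm hu p]
  -- pointwise derivative identity
  have hptwise : ∀ p : ℝ × ℝ, g0 p + θ * g1 p + θ * g2 p = -2 * mm p + 2 * θ * ψ p := by
    intro p
    have hD0u : D0 u p = -Complex.I * fderiv ℝ u p (1,0) := rfl
    have hD1u : D1 u p = -Complex.I * fderiv ℝ u p (0,1) := rfl
    have hM : Mop θ ξₙ u p = -Complex.I * fderiv ℝ (D0 u) p (1,0)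
        - (θ:ℂ) * ((-Complex.I * fderiv ℝ (D1 u) p (0,1)) + (↑(p.2^2 * ξₙ^2) : ℂ) * u p) := rfl
    simp only [hg0def, hg1def, hg2def, hmmdef, hψdef, hM, hmix p, hD0u, hD1u]
    simp only [Complex.mul_re, Complex.mul_im, Complex.add_re, Complex.add_im,
      Complex.sub_re, Complex.sub_im, Complex.neg_re, Complex.neg_im, Complex.I_re,
      Complex.I_im, Complex.conj_re, Complex.conj_im, Complex.ofReal_re, Complex.ofReal_im]
    ring
  -- the pairing as an integral of mm
  have hPm : ∀ x : ℝ, (pair2 (Mop θ ξₙ u) (D0 u) x).im = ∫ y : ℝ, mm (x, y) := by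
    intro x
    have hint : Integrable (fun y : ℝ => Mop θ ξₙ u (x,y) * (starRingEnd ℂ) (D0 u (x,y))) :=
      WEI.integrable_of_support_Icc (R := r)
        ((hcM.mul (hconj.comp hcv0)).comp (continuous_const.prodMk continuous_id))
        (fun y hy => by simp [hMz _ (hnot _ (hmem x y hy))])
    have h := Complex.imCLM.integral_comp_comm hint
    simp only [Complex.imCLM_apply] at h
    rw [pair2]
    exact h.symm
  -- integral of ψ vanishes (integration by parts in x₁)
  have hψ0 : ∀ x : ℝ, ∫ y : ℝ, ψ (x, y) = 0 := by
    intro x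
    apply WEI.integral_deriv_zero (R := r)
      (φ := fun y => ((D0 u (x,y)) * (starRingEnd ℂ) (D1 u (x,y))).re)
      (hcψ.comp (continuous_const.prodMk continuous_id))
      (fun y hy => by simp [hz_v0 _ (hnot _ (hmem x y hy))])
      (fun y hy => hψz _ (hmem x y hy))
    intro y
    have h0 := WEI.hasDerivAt_slice_snd hd0 x y
    have h1 := WEI.hasDerivAt_slice_snd hd1 x y
    have h1c : HasDerivAt (fun y' => (starRingEnd ℂ) (D1 u (x, y')))
        ((starRingEnd ℂ) (fderiv ℝ (D1 u) (x, y) (0,1))) y := by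
      simpa only [starRingEnd_apply] using h1.star
    exact WEI.hasDerivAt_re (h0.mul h1c)
  -- derivative of the energy
  have hEn' : ∀ x, HasDerivAt (En θ ξₙ u)
      (-2 * (pair2 (Mop θ ξₙ u) (D0 u) x).im) x := by
    intro x
    have h : HasDerivAt (En θ ξₙ u)
        ((∫ y : ℝ, g0 (x,y)) + θ * (∫ y : ℝ, g1 (x,y)) + θ * (∫ y : ℝ, g2 (x,y))) x :=
      ((hA0 x).add ((hA1 x).const_mul θ)).add ((hA2 x).const_mul θ)
    have hig0 : Integrable (fun y : ℝ => g0 (x,y)) :=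
      WEI.integrable_of_support_Icc (hcg0.comp (continuous_const.prodMk continuous_id))
        (fun y hy => hg0z _ (hmem x y hy))
    have hig1 : Integrable (fun y : ℝ => g1 (x,y)) :=
      WEI.integrable_of_support_Icc (hcg1.comp (continuous_const.prodMk continuous_id))
        (fun y hy => hg1z _ (hmem x y hy))
    have hig2 : Integrable (fun y : ℝ => g2 (x,y)) :=
      WEI.integrable_of_support_Icc (hcg2.comp (continuous_const.prodMk continuous_id))
        (fun y hy => hg2z _ (hmem x y hy))
    have himm : Integrable (fun y : ℝ => mm (x,y)) :=
      WEI.integrable_of_support_Icc (hcmm.comp (continuous_const.prodMk continuous_id))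
        (fun y hy => hmmz _ (hmem x y hy))
    have hiψ : Integrable (fun y : ℝ => ψ (x,y)) :=
      WEI.integrable_of_support_Icc (hcψ.comp (continuous_const.prodMk continuous_id))
        (fun y hy => hψz _ (hmem x y hy))
    have heq : (∫ y : ℝ, g0 (x,y)) + θ * (∫ y : ℝ, g1 (x,y)) + θ * (∫ y : ℝ, g2 (x,y))
        = -2 * (pair2 (Mop θ ξₙ u) (D0 u) x).im := by
      have e1 : ∫ y : ℝ, (g0 (x,y) + θ * g1 (x,y) + θ * g2 (x,y))
          = (∫ y : ℝ, g0 (x,y)) + θ * (∫ y : ℝ, g1 (x,y)) + θ * (∫ y : ℝ, g2 (x,y)) := by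
        have hig01 : Integrable (fun y : ℝ => g0 (x,y) + θ * g1 (x,y)) := by
          exact hig0.add (hig1.const_mul θ)
        rw [integral_add hig01 (hig2.const_mul θ),
          integral_add hig0 (hig1.const_mul θ), integral_const_mul θ, integral_const_mul θ]
      have e2 : ∫ y : ℝ, (-2 * mm (x,y) + 2 * θ * ψ (x,y))
          = -2 * (∫ y : ℝ, mm (x,y)) + 2 * θ * (∫ y : ℝ, ψ (x,y)) := by
        rw [integral_add (himm.const_mul (-2)) (hiψ.const_mul (2*θ)),
          integral_const_mul (-2), integral_const_mul (2*θ)]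
      have e3 : (∫ y : ℝ, (g0 (x,y) + θ * g1 (x,y) + θ * g2 (x,y)))
          = ∫ y : ℝ, (-2 * mm (x,y) + 2 * θ * ψ (x,y)) := by
        congr 1
        funext y
        exact hptwise (x,y)
      rw [hPm x, ← e1, e3, e2, hψ0 x]
      ring
    rw [← heq]
    exact h
  -- the weight
  set c : ℝ := 2 * τ * (Real.sqrt (1 + ξₙ ^ 2)) ^ (1 / s) with hcdef
  have hWcont : Continuous (Wt τ ξₙ s a) := by
    exact Real.continuous_exp.comp (continuous_const.mul (continuous_id.sub continuous_const))
  have hW : ∀ x, HasDerivAt (Wt τ ξₙ s a) (c * Wt τ ξₙ s a x) x := by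
    intro x
    have h := (((hasDerivAt_id x).sub_const a).const_mul c).exp
    simp only [id_eq, mul_one] at h
    have he : c * Wt τ ξₙ s a x = Real.exp (c * (x - a)) * c := by
      rw [show Wt τ ξₙ s a x = Real.exp (c * (x - a)) from rfl]
      ring
    rw [he]
    exact h
  -- continuity and decay of the pieces
  have hEncont : Continuous (En θ ξₙ u) := by
    have hd : Differentiable ℝ (En θ ξₙ u) := fun x => (hEn' x).differentiableAt
    exact hd.continuous
  have hEnz : ∀ x : ℝ, x ∉ Icc (-r) r → En θ ξₙ u x = 0 := by
    intro x hx
    have h0 : ∀ y : ℝ, D0 u (x,y) = 0 := fun y => hz_v0 _ (hnot _ (hmem1 x y hx))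
    have h1 : ∀ y : ℝ, D1 u (x,y) = 0 := fun y => hz_v1 _ (hnot _ (hmem1 x y hx))
    have h2 : ∀ y : ℝ, u (x,y) = 0 := fun y => hz_u _ (hnot _ (hmem1 x y hx))
    simp [En, nsq, h0, h1, h2]
  have hPz : ∀ x : ℝ, x ∉ Icc (-r) r → (pair2 (Mop θ ξₙ u) (D0 u) x).im = 0 := by
    intro x hx
    have h2 : ∀ y : ℝ, Mop θ ξₙ u (x,y) = 0 := fun y => hMz _ (hnot _ (hmem1 x y hx))
    simp [pair2, h2]
  obtain ⟨Cm, hCm⟩ : ∃ C, ∀ p, ‖mm p‖ ≤ C :=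
    (HasCompactSupport.intro (isCompact_Icc.prod isCompact_Icc) hmmz).exists_bound_of_continuous
      hcmm
  have hPcont : Continuous fun x => (pair2 (Mop θ ξₙ u) (D0 u) x).im := by
    have h : Continuous fun x => ∫ y : ℝ, mm (x, y) := by
      apply continuous_of_dominated (bound := (Icc (-r) r).indicator fun _ => Cm)
      · exact fun x => (hcmm.comp (continuous_const.prodMk continuous_id)).aestronglyMeasurable
      · intro x
        apply Filter.Eventually.of_forall
        intro y
        by_cases hy : y ∈ Icc (-r) r
        · rw [Set.indicator_of_mem hy]; exact hCm _
        · rw [Set.indicator_of_notMem hy]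
          have := hmmz _ (hmem x y hy)
          simp [this]
      · rw [integrable_indicator_iff measurableSet_Icc]
        exact integrableOn_const measure_Icc_lt_top.ne
      · exact Filter.Eventually.of_forall fun y => hcmm.comp (continuous_id.prodMk continuous_const)
    have he : (fun x => (pair2 (Mop θ ξₙ u) (D0 u) x).im) = fun x => ∫ y : ℝ, mm (x,y) :=
      funext hPm
    rw [he]
    exact h
  -- integrability on the half line
  have hint1 : IntegrableOn (fun x => Wt τ ξₙ s a x * En θ ξₙ u x) (Ioi (0:ℝ)) :=
    ((hWcont.mul hEncont).integrable_of_hasCompactSupport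
      (HasCompactSupport.intro isCompact_Icc
        (fun x hx => by simp only [Pi.mul_apply]; rw [hEnz x hx, mul_zero]))).integrableOn
  have hint2 : IntegrableOn
      (fun x => Wt τ ξₙ s a x * (pair2 (Mop θ ξₙ u) (D0 u) x).im) (Ioi (0:ℝ)) :=
    ((hWcont.mul hPcont).integrable_of_hasCompactSupport
      (HasCompactSupport.intro isCompact_Icc
        (fun x hx => by simp only [Pi.mul_apply]; rw [hPz x hx, mul_zero]))).integrableOn
  -- FTC on (0, ∞)
  have hG : ∀ x : ℝ, HasDerivAt (fun x => Wt τ ξₙ s a x * En θ ξₙ u x)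
      (c * (Wt τ ξₙ s a x * En θ ξₙ u x)
        + (-2) * (Wt τ ξₙ s a x * (pair2 (Mop θ ξₙ u) (D0 u) x).im)) x := by
    intro x
    have h := (hW x).mul (hEn' x)
    refine h.congr_deriv ?_
    ring
  have hlim : Filter.Tendsto (fun x => Wt τ ξₙ s a x * En θ ξₙ u x) Filter.atTop (nhds 0) := by
    apply Filter.Tendsto.congr' _ tendsto_const_nhds
    filter_upwards [Filter.eventually_ge_atTop (r+1)] with x hx
    have hxx : x ∉ Icc (-r) r := fun hm => by have := hm.2; linarith
    simp [hEnz x hxx]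
  have hFTC := integral_Ioi_of_hasDerivAt_of_tendsto (a := (0:ℝ)) (m := (0:ℝ))
    ((hG 0).continuousAt.continuousWithinAt) (fun x _ => hG x)
    (by
      have he : (fun x => c * (Wt τ ξₙ s a x * En θ ξₙ u x)
          + (-2) * (Wt τ ξₙ s a x * (pair2 (Mop θ ξₙ u) (D0 u) x).im))
          = fun x => c * (Wt τ ξₙ s a x * En θ ξₙ u x)
          + (-2) * (Wt τ ξₙ s a x * (pair2 (Mop θ ξₙ u) (D0 u) x).im) := rfl
      exact (hint1.const_mul c).add (hint2.const_mul (-2)))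
    hlim
  have hsplit : ∫ x in Ioi (0:ℝ), (c * (Wt τ ξₙ s a x * En θ ξₙ u x)
      + (-2) * (Wt τ ξₙ s a x * (pair2 (Mop θ ξₙ u) (D0 u) x).im))
      = c * (∫ x in Ioi (0:ℝ), Wt τ ξₙ s a x * En θ ξₙ u x)
      + (-2) * ∫ x in Ioi (0:ℝ), Wt τ ξₙ s a x * (pair2 (Mop θ ξₙ u) (D0 u) x).im := by
    rw [integral_add (hint1.const_mul c) (hint2.const_mul (-2)),
      integral_const_mul c, integral_const_mul (-2)]
  rw [hsplit] at hFTC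
  linarith [hFTC]
end

section
/- Let n ≥ 2, b₀ > 0, λ > 0, R > 0, θ ∈ ℝ. Set A = λ^{1/2} b₀^{1/5} R^{−1/5} e^{−iθ/5}, B = (1/3) b₀^{−4/5} R^{4/5} e^{4iθ/5}, ζ = −(1/3) b₀^{−8/5} R^{8/5} e^{8iθ/5}, and μ = b₀^{−2/5} R^{12/5} e^{12iθ/5} (2/(27b₀²) − 1). Let w : ℂ → ℂ be an entire function satisfying w″(y) = (y³ + ζy + μ)·w(y) for all y ∈ ℂ. Then the smooth function U : ℝ^{n+1} → ℂ defined by U(x) = exp(i x₀ λ^{1/2} R e^{iθ} + i xₙ λ) · w(A x₁ + B) satisfies P U = 0 on all of ℝ^{n+1}, where Pu = D₀³u − (D₁² + x₁²Dₙ²)D₀u − b₀x₁³Dₙ³u. In particular, if b₀ = √2/(3√3) then μ = 0 and w may be taken to be any entire solution of w″(y) = (y³ + ζy)w(y). -/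
open Complex

/-- Partial derivative in the `j`-th coordinate direction. -/
noncomputable def pd {N : ℕ} (j : Fin N) (f : (Fin N → ℝ) → ℂ) : (Fin N → ℝ) → ℂ :=
  fun x => fderiv ℝ f x (Pi.single j 1)

/-- `D_j = -i ∂/∂x_j`. -/
noncomputable def Dop {N : ℕ} (j : Fin N) (f : (Fin N → ℝ) → ℂ) : (Fin N → ℝ) → ℂ :=
  fun x => -Complex.I * pd j f x

/-- The operator `P u = D₀³u − (D₁² + x₁²Dₙ²)D₀u − b₀ x₁³ Dₙ³ u` on `ℝ^{n+1}`. -/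
noncomputable def Pop (n : ℕ) (b₀ : ℝ) (u : (Fin (n+1) → ℝ) → ℂ) : (Fin (n+1) → ℝ) → ℂ :=
  fun x =>
    Dop 0 (Dop 0 (Dop 0 u)) x
      - (Dop 1 (Dop 1 (Dop 0 u)) x
         + (↑(x 1) : ℂ)^2 * Dop (Fin.last n) (Dop (Fin.last n) (Dop 0 u)) x)
      - (b₀ : ℂ) * (↑(x 1) : ℂ)^3 *
          Dop (Fin.last n) (Dop (Fin.last n) (Dop (Fin.last n) u)) x

/-! ### Auxiliary machinery -/

/-- The ansatz shape: a phase in coordinates `i0, iN` times a profile in coordinate `i1`. -/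
noncomputable def Fform {N : ℕ} (i0 i1 iN : Fin N) (c l A B : ℂ) (v : ℂ → ℂ) :
    (Fin N → ℝ) → ℂ :=
  fun x => Complex.exp (c * (x i0 : ℂ) + l * (x iN : ℂ)) * v (A * (x i1 : ℂ) + B)

lemma hre {N : ℕ} (k : Fin N) (x : Fin N → ℝ) :
    HasFDerivAt (fun x : Fin N → ℝ => ((x k : ℝ) : ℂ))
      (Complex.ofRealCLM.comp (ContinuousLinearMap.proj k)) x :=
  Complex.ofRealCLM.hasFDerivAt.comp x (hasFDerivAt_apply k x)

lemma pd_master {N : ℕ} (i0 i1 iN : Fin N) (c l A B : ℂ) (v : ℂ → ℂ)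
    (hv : Differentiable ℂ v) (x : Fin N → ℝ) (j : Fin N) :
    pd j (Fform i0 i1 iN c l A B v) x
      = Complex.exp (c * (x i0 : ℂ) + l * (x iN : ℂ)) *
          ((c * (((Pi.single j 1 : Fin N → ℝ) i0 : ℝ) : ℂ)
              + l * (((Pi.single j 1 : Fin N → ℝ) iN : ℝ) : ℂ))
              * v (A * (x i1 : ℂ) + B)
            + A * (((Pi.single j 1 : Fin N → ℝ) i1 : ℝ) : ℂ) * deriv v (A * (x i1 : ℂ) + B)) := by
  have hphase : HasFDerivAt (fun x : Fin N → ℝ => c * ((x i0 : ℝ) : ℂ) + l * ((x iN : ℝ) : ℂ))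
      (c • (Complex.ofRealCLM.comp (ContinuousLinearMap.proj i0))
        + l • (Complex.ofRealCLM.comp (ContinuousLinearMap.proj iN))) x :=
    ((hre i0 x).const_mul c).add ((hre iN x).const_mul l)
  have hexp := hphase.cexp
  have hin : HasFDerivAt (fun x : Fin N → ℝ => A * ((x i1 : ℝ) : ℂ) + B)
      (A • (Complex.ofRealCLM.comp (ContinuousLinearMap.proj i1))) x :=
    ((hre i1 x).const_mul A).add_const B
  set y := A * ((x i1 : ℝ) : ℂ) + B with hy
  have hvd : HasFDerivAt v
      (((ContinuousLinearMap.smulRight (1 : ℂ →L[ℂ] ℂ) (deriv v y)).restrictScalars ℝ)) y :=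
    ((hv y).hasDerivAt.hasFDerivAt).restrictScalars ℝ
  have hcomp := hvd.comp x hin
  have htot := hexp.mul hcomp
  simp only [Function.comp_def, Pi.mul_def] at htot
  unfold pd Fform
  rw [htot.fderiv]
  simp [ContinuousLinearMap.comp_apply, ContinuousLinearMap.proj_apply, Function.comp,
    Pi.single_apply]
  ring

lemma Dop_i0 {N : ℕ} (i0 i1 iN : Fin N) (c l A B : ℂ) (v : ℂ → ℂ)
    (hv : Differentiable ℂ v) (h10 : i1 ≠ i0) (hN0 : iN ≠ i0) :
    Dop i0 (Fform i0 i1 iN c l A B v)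
      = Fform i0 i1 iN c l A B (fun z => (-Complex.I * c) * v z) := by
  funext x
  unfold Dop
  rw [pd_master _ _ _ _ _ _ _ _ hv]
  simp only [Fform, Pi.single_eq_same, Pi.single_eq_of_ne h10, Pi.single_eq_of_ne hN0,
    Complex.ofReal_one, Complex.ofReal_zero]
  ring

lemma Dop_iN {N : ℕ} (i0 i1 iN : Fin N) (c l A B : ℂ) (v : ℂ → ℂ)
    (hv : Differentiable ℂ v) (h0N : i0 ≠ iN) (h1N : i1 ≠ iN) :
    Dop iN (Fform i0 i1 iN c l A B v)
      = Fform i0 i1 iN c l A B (fun z => (-Complex.I * l) * v z) := by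
  funext x
  unfold Dop
  rw [pd_master _ _ _ _ _ _ _ _ hv]
  simp only [Fform, Pi.single_eq_same, Pi.single_eq_of_ne h0N, Pi.single_eq_of_ne h1N,
    Complex.ofReal_one, Complex.ofReal_zero]
  ring

lemma Dop_i1 {N : ℕ} (i0 i1 iN : Fin N) (c l A B : ℂ) (v : ℂ → ℂ)
    (hv : Differentiable ℂ v) (h01 : i0 ≠ i1) (hN1 : iN ≠ i1) :
    Dop i1 (Fform i0 i1 iN c l A B v)
      = Fform i0 i1 iN c l A B (fun z => (-Complex.I * A) * deriv v z) := by
  funext x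
  unfold Dop
  rw [pd_master _ _ _ _ _ _ _ _ hv]
  simp only [Fform, Pi.single_eq_same, Pi.single_eq_of_ne h01, Pi.single_eq_of_ne hN1,
    Complex.ofReal_one, Complex.ofReal_zero]
  ring

lemma rpow_div5 (x : ℝ) (hx : 0 < x) (k : ℕ) :
    x ^ ((k:ℝ)/5) = (x ^ ((1:ℝ)/5))^k := by
  rw [← Real.rpow_natCast (x ^ ((1:ℝ)/5)) k, ← Real.rpow_mul hx.le]
  ring_nf

lemma rpow_neg_div5 (x : ℝ) (hx : 0 < x) (k : ℕ) :
    x ^ (-(k:ℝ)/5) = ((x ^ ((1:ℝ)/5))^k)⁻¹ := by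
  rw [neg_div, Real.rpow_neg hx.le, rpow_div5 x hx k]

/-- The exact-solution computation (3.71)–(3.77): with the stated choices of
`A, B, ζ, μ` and any entire solution `w` of `w″(y) = (y³ + ζy + μ)w(y)`, the function
`U(x) = exp(i x₀ λ^{1/2} R e^{iθ} + i xₙ λ) · w(A x₁ + B)` solves `P U = 0` on `ℝ^{n+1}`;
moreover, if `b₀ = √2/(3√3)` then `μ = 0`. -/
theorem exact_null_solution (n : ℕ) (hn : 2 ≤ n) (b₀ lam R θ : ℝ)
    (hb₀ : 0 < b₀) (hlam : 0 < lam) (hR : 0 < R)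
    (A B ζ μ : ℂ)
    (hA : A = (↑(lam ^ ((1:ℝ)/2) * b₀ ^ ((1:ℝ)/5) * R ^ (-(1:ℝ)/5)) : ℂ)
            * Complex.exp (-(θ : ℂ) * Complex.I / 5))
    (hB : B = (↑((1/3 : ℝ) * b₀ ^ (-(4:ℝ)/5) * R ^ ((4:ℝ)/5)) : ℂ)
            * Complex.exp (4 * (θ : ℂ) * Complex.I / 5))
    (hζ : ζ = -((↑((1/3 : ℝ) * b₀ ^ (-(8:ℝ)/5) * R ^ ((8:ℝ)/5)) : ℂ)
            * Complex.exp (8 * (θ : ℂ) * Complex.I / 5)))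
    (hμ : μ = (↑(b₀ ^ (-(2:ℝ)/5) * R ^ ((12:ℝ)/5)) : ℂ)
            * Complex.exp (12 * (θ : ℂ) * Complex.I / 5)
            * ((2 / (27 * b₀ ^ 2) - 1 : ℝ) : ℂ))
    (w : ℂ → ℂ) (hw : Differentiable ℂ w)
    (hweq : ∀ y : ℂ, deriv (deriv w) y = (y ^ 3 + ζ * y + μ) * w y) :
    (∀ x : Fin (n+1) → ℝ,
        Pop n b₀
          (fun x =>
            Complex.exp (Complex.I * (↑(x 0) : ℂ) * (↑(lam ^ ((1:ℝ)/2) * R) : ℂ)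
                * Complex.exp ((θ : ℂ) * Complex.I)
              + Complex.I * (↑(x (Fin.last n)) : ℂ) * (lam : ℂ))
              * w (A * (↑(x 1) : ℂ) + B)) x = 0)
      ∧ (b₀ = Real.sqrt 2 / (3 * Real.sqrt 3) → μ = 0) := by
  constructor
  · -- main PDE computation
    intro x
    -- index distinctness
    have hv1 : (1 : Fin (n+1)).val = 1 := by
      simp [Fin.val_one', Nat.mod_eq_of_lt]; omega
    have hvN : (Fin.last n).val = n := Fin.val_last n
    have hv0 : (0 : Fin (n+1)).val = 0 := rfl
    have h10 : (1 : Fin (n+1)) ≠ 0 := by rw [Ne, Fin.ext_iff, hv1, hv0]; omega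
    have h01 : (0 : Fin (n+1)) ≠ 1 := by rw [Ne, Fin.ext_iff, hv1, hv0]; omega
    have hN0 : (Fin.last n) ≠ (0 : Fin (n+1)) := by rw [Ne, Fin.ext_iff, hvN, hv0]; omega
    have h0N : (0 : Fin (n+1)) ≠ Fin.last n := by rw [Ne, Fin.ext_iff, hvN, hv0]; omega
    have hN1 : (Fin.last n) ≠ (1 : Fin (n+1)) := by rw [Ne, Fin.ext_iff, hvN, hv1]; omega
    have h1N : (1 : Fin (n+1)) ≠ Fin.last n := by rw [Ne, Fin.ext_iff, hvN, hv1]; omega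
    set L := Fin.last n with hL
    set K : ℂ := (↑(lam ^ ((1:ℝ)/2) * R) : ℂ) * Complex.exp ((θ : ℂ) * Complex.I) with hK
    set c : ℂ := Complex.I * K with hc
    set l : ℂ := Complex.I * (lam : ℂ) with hl
    -- the solution in Fform shape
    have hU : (fun x : Fin (n+1) → ℝ =>
        Complex.exp (Complex.I * (↑(x 0) : ℂ) * (↑(lam ^ ((1:ℝ)/2) * R) : ℂ)
            * Complex.exp ((θ : ℂ) * Complex.I)
          + Complex.I * (↑(x (Fin.last n)) : ℂ) * (lam : ℂ))
          * w (A * (↑(x 1) : ℂ) + B)) = Fform 0 1 L c l A B w := by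
      funext z
      unfold Fform
      rw [hc, hl, hK, hL]
      congr 2
      ring
    rw [hU]
    -- basic cancellations of I
    have hIc : ∀ X : ℂ, -Complex.I * c * X = K * X := by
      intro X; rw [hc]; rw [show -Complex.I * (Complex.I * K) = (-(Complex.I*Complex.I)) * K by ring,
        Complex.I_mul_I]; ring
    have hIl : ∀ X : ℂ, -Complex.I * l * X = (lam : ℂ) * X := by
      intro X; rw [hl]; rw [show -Complex.I * (Complex.I * (lam:ℂ)) = (-(Complex.I*Complex.I)) * (lam:ℂ) by ring,
        Complex.I_mul_I]; ring
    have hIA : ∀ X : ℂ, (-Complex.I * A) * ((-Complex.I * A) * X) = -(A^2) * X := by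
      intro X; rw [show (-Complex.I * A) * ((-Complex.I * A) * X)
        = (Complex.I*Complex.I) * (A^2 * X) by ring, Complex.I_mul_I]; ring
    -- differentiability of deriv w
    have hwa : AnalyticOnNhd ℂ w Set.univ := fun y _ => hw.analyticAt y
    have hw' : Differentiable ℂ (deriv w) := fun z => ((hwa.deriv) z trivial).differentiableAt
    -- step equalities
    have e1 : Dop 0 (Fform 0 1 L c l A B w) = Fform 0 1 L c l A B (fun z => K * w z) := by
      rw [Dop_i0 0 1 L c l A B w hw h10 hN0]
      exact congrArg _ (funext fun z => hIc (w z))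
    have e2 : Dop 0 (Fform 0 1 L c l A B (fun z => K * w z))
        = Fform 0 1 L c l A B (fun z => K^2 * w z) := by
      rw [Dop_i0 0 1 L c l A B _ (hw.const_mul K) h10 hN0]
      exact congrArg _ (funext fun z => by rw [hIc]; ring)
    have e3 : Dop 0 (Fform 0 1 L c l A B (fun z => K^2 * w z))
        = Fform 0 1 L c l A B (fun z => K^3 * w z) := by
      rw [Dop_i0 0 1 L c l A B _ (hw.const_mul (K^2)) h10 hN0]
      exact congrArg _ (funext fun z => by rw [hIc]; ring)
    have f1 : Dop 1 (Fform 0 1 L c l A B (fun z => K * w z))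
        = Fform 0 1 L c l A B (fun z => (-Complex.I * A) * (K * deriv w z)) := by
      rw [Dop_i1 0 1 L c l A B _ (hw.const_mul K) h01 hN1]
      exact congrArg _ (funext fun z => by rw [deriv_const_mul_field])
    have f2 : Dop 1 (Fform 0 1 L c l A B (fun z => (-Complex.I * A) * (K * deriv w z)))
        = Fform 0 1 L c l A B (fun z => -(A^2) * (K * deriv (deriv w) z)) := by
      rw [Dop_i1 0 1 L c l A B _ (((hw'.const_mul K).const_mul _)) h01 hN1]
      refine congrArg _ (funext fun z => ?_)
      rw [deriv_const_mul_field, deriv_const_mul_field, hIA]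
    have g1 : Dop L (Fform 0 1 L c l A B (fun z => K * w z))
        = Fform 0 1 L c l A B (fun z => (lam:ℂ) * (K * w z)) := by
      rw [Dop_iN 0 1 L c l A B _ (hw.const_mul K) h0N h1N]
      exact congrArg _ (funext fun z => hIl _)
    have g2 : Dop L (Fform 0 1 L c l A B (fun z => (lam:ℂ) * (K * w z)))
        = Fform 0 1 L c l A B (fun z => (lam:ℂ)^2 * (K * w z)) := by
      rw [Dop_iN 0 1 L c l A B _ ((hw.const_mul K).const_mul _) h0N h1N]
      exact congrArg _ (funext fun z => by rw [hIl]; ring)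
    have m1 : Dop L (Fform 0 1 L c l A B w) = Fform 0 1 L c l A B (fun z => (lam:ℂ) * w z) := by
      rw [Dop_iN 0 1 L c l A B w hw h0N h1N]
      exact congrArg _ (funext fun z => hIl _)
    have m2 : Dop L (Fform 0 1 L c l A B (fun z => (lam:ℂ) * w z))
        = Fform 0 1 L c l A B (fun z => (lam:ℂ)^2 * w z) := by
      rw [Dop_iN 0 1 L c l A B _ (hw.const_mul _) h0N h1N]
      exact congrArg _ (funext fun z => by rw [hIl]; ring)
    have m3 : Dop L (Fform 0 1 L c l A B (fun z => (lam:ℂ)^2 * w z))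
        = Fform 0 1 L c l A B (fun z => (lam:ℂ)^3 * w z) := by
      rw [Dop_iN 0 1 L c l A B _ (hw.const_mul _) h0N h1N]
      exact congrArg _ (funext fun z => by rw [hIl]; ring)
    unfold Pop
    rw [e1, e2, e3, f1, f2, g1, g2, m1, m2, m3]
    simp only [Fform]
    set t : ℂ := ((x 1 : ℝ) : ℂ) with ht
    set y : ℂ := A * t + B with hy
    rw [hweq y]
    -- the key algebraic identity
    have key : K^3 + A^2 * K * (y^3 + ζ*y + μ) - t^2 * (lam:ℂ)^2 * K
        - (b₀:ℂ) * t^3 * (lam:ℂ)^3 = 0 := by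
      set a : ℂ := ((b₀ ^ ((1:ℝ)/5) : ℝ) : ℂ) with ha
      set r : ℂ := ((R ^ ((1:ℝ)/5) : ℝ) : ℂ) with hr
      set s : ℂ := ((lam ^ ((1:ℝ)/2) : ℝ) : ℂ) with hs
      set E : ℂ := Complex.exp ((θ:ℂ) * Complex.I / 5) with hE
      have ha0 : a ≠ 0 := by
        simp only [ha, ne_eq, Complex.ofReal_eq_zero]
        positivity
      have hr0 : r ≠ 0 := by
        simp only [hr, ne_eq, Complex.ofReal_eq_zero]
        positivity
      have hE0 : E ≠ 0 := Complex.exp_ne_zero _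
      have hb5 : (b₀ : ℂ) = a^5 := by
        rw [ha, ← Complex.ofReal_pow, ← rpow_div5 b₀ hb₀ 5]
        norm_num
      have hR5 : (R : ℂ) = r^5 := by
        rw [hr, ← Complex.ofReal_pow, ← rpow_div5 R hR 5]
        norm_num
      have hlam2 : (lam : ℂ) = s^2 := by
        rw [hs, ← Complex.ofReal_pow]
        congr 1
        rw [← Real.rpow_natCast (lam ^ ((1:ℝ)/2)) 2, ← Real.rpow_mul hlam.le]
        norm_num
      have hEneg : Complex.exp (-(θ:ℂ) * Complex.I / 5) = E⁻¹ := by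
        rw [show -(θ:ℂ)*Complex.I/5 = -((θ:ℂ)*Complex.I/5) by ring, Complex.exp_neg]
      have hE4 : Complex.exp (4*(θ:ℂ)*Complex.I/5) = E^4 := by
        rw [show (4:ℂ)*(θ:ℂ)*Complex.I/5 = (4:ℕ)*((θ:ℂ)*Complex.I/5) by push_cast; ring,
          Complex.exp_nat_mul]
      have hE8 : Complex.exp (8*(θ:ℂ)*Complex.I/5) = E^8 := by
        rw [show (8:ℂ)*(θ:ℂ)*Complex.I/5 = (8:ℕ)*((θ:ℂ)*Complex.I/5) by push_cast; ring,
          Complex.exp_nat_mul]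
      have hE12 : Complex.exp (12*(θ:ℂ)*Complex.I/5) = E^12 := by
        rw [show (12:ℂ)*(θ:ℂ)*Complex.I/5 = (12:ℕ)*((θ:ℂ)*Complex.I/5) by push_cast; ring,
          Complex.exp_nat_mul]
      have hE5 : Complex.exp ((θ:ℂ)*Complex.I) = E^5 := by
        rw [show (θ:ℂ)*Complex.I = (5:ℕ)*((θ:ℂ)*Complex.I/5) by push_cast; ring,
          Complex.exp_nat_mul]
      have hA' : A = s * a * r⁻¹ * E⁻¹ := by
        rw [hA, hEneg]
        rw [show R ^ (-(1:ℝ)/5) = ((R ^ ((1:ℝ)/5))^1)⁻¹ by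
          rw [← rpow_neg_div5 R hR 1]; norm_num]
        push_cast
        try rw [← ha, ← hr, ← hs]
        try push_cast
        try ring
      have hB' : B = (1/3) * (a^4)⁻¹ * r^4 * E^4 := by
        rw [hB, hE4, show b₀ ^ (-(4:ℝ)/5) = ((b₀ ^ ((1:ℝ)/5))^4)⁻¹ by
          rw [← rpow_neg_div5 b₀ hb₀ 4]; norm_num,
          show R ^ ((4:ℝ)/5) = (R ^ ((1:ℝ)/5))^4 by rw [← rpow_div5 R hR 4]; norm_num]
        push_cast
        try rw [← ha, ← hr]
        try push_cast
        try ring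
      have hζ' : ζ = -((1/3) * (a^8)⁻¹ * r^8 * E^8) := by
        rw [hζ, hE8, show b₀ ^ (-(8:ℝ)/5) = ((b₀ ^ ((1:ℝ)/5))^8)⁻¹ by
          rw [← rpow_neg_div5 b₀ hb₀ 8]; norm_num,
          show R ^ ((8:ℝ)/5) = (R ^ ((1:ℝ)/5))^8 by rw [← rpow_div5 R hR 8]; norm_num]
        push_cast
        try rw [← ha, ← hr]
        try push_cast
        try ring
      have hμ' : μ = (a^2)⁻¹ * r^12 * E^12 * (2/(27*a^10) - 1) := by
        rw [hμ, hE12, show b₀ ^ (-(2:ℝ)/5) = ((b₀ ^ ((1:ℝ)/5))^2)⁻¹ by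
          rw [← rpow_neg_div5 b₀ hb₀ 2]; norm_num,
          show R ^ ((12:ℝ)/5) = (R ^ ((1:ℝ)/5))^12 by rw [← rpow_div5 R hR 12]; norm_num]
        push_cast
        try rw [← ha, ← hr, show ((b₀:ℂ))^2 = a^10 by rw [hb5]; ring]
        try push_cast
        try ring
      have hK' : K = s * r^5 * E^5 := by
        rw [hK, hE5]
        push_cast
        try rw [← hs, hR5]
        try ring
      rw [hy, hA', hB', hζ', hμ', hK', hb5, hlam2]
      ring_nf
      field_simp
      ring
    linear_combination (Complex.exp (c * ((x 0 : ℝ):ℂ) + l * ((x L : ℝ):ℂ)) * w y) * key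
  · -- μ = 0 when b₀ = √2/(3√3)
    intro hb
    have h2 : (2 / (27 * b₀ ^ 2) - 1 : ℝ) = 0 := by
      rw [hb, div_pow, mul_pow, Real.sq_sqrt (by norm_num : (0:ℝ) ≤ 2),
        Real.sq_sqrt (by norm_num : (0:ℝ) ≤ 3)]
      norm_num
    rw [hμ, h2]
    simp
end

section
/- Let α, β, ζ ∈ ℂ with α ≠ 0, and let w : ℂ → ℂ be an entire function satisfying w″(y) = (y³ + ζy)·w(y) for all y ∈ ℂ. Assume that the restriction x ↦ w(αx + β) (x ∈ ℝ) is a Schwartz function on ℝ, and that ∫_ℝ x^k · w(αx + β) dx = 0 for k = 0, 1, 2. Then w is identically zero on ℂ. -/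
open Complex MeasureTheory

open Set


private lemma ode3_zero (A B C E : ℂ) (v : ℝ → ℂ)
    (hd1 : ∀ ξ, HasDerivAt v (deriv v ξ) ξ)
    (hd2 : ∀ ξ, HasDerivAt (deriv v) (iteratedDeriv 2 v ξ) ξ)
    (hd3 : ∀ ξ : ℝ, HasDerivAt (iteratedDeriv 2 v)
      (A * iteratedDeriv 2 v ξ + B * deriv v ξ + (C + E * (ξ : ℂ) ^ 2) * v ξ) ξ)
    (h0 : v 0 = 0) (h1 : deriv v 0 = 0) (h2 : iteratedDeriv 2 v 0 = 0) :
    ∀ ξ, v ξ = 0 := by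
  intro ξ₀
  set T : ℝ := |ξ₀| + 1 with hT
  have hT1 : (1:ℝ) ≤ T := le_add_of_nonneg_left (abs_nonneg _)
  have hT0 : (0:ℝ) < T := by linarith
  set proj : ℝ → ℝ := fun t => max (-T) (min T t) with hproj
  have hprojle : ∀ t, |proj t| ≤ T := by
    intro t
    rw [abs_le]
    constructor
    · exact le_max_left _ _
    · exact max_le (by linarith) (min_le_left _ _)
  have hprojeq : ∀ t ∈ Ioo (-T) T, proj t = t := by
    intro t ht
    simp only [hproj]
    rw [min_eq_right ht.2.le, max_eq_right ht.1.le]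
  set Kr : ℝ := 1 + (‖A‖ + ‖B‖ + (‖C‖ + ‖E‖ * T ^ 2)) with hKr
  have hKr0 : 0 ≤ Kr := by positivity
  set F : ℝ → ℂ × ℂ × ℂ → ℂ × ℂ × ℂ := fun t p =>
    (p.2.1, p.2.2, A * p.2.2 + B * p.2.1 + (C + E * ((proj t : ℝ) : ℂ) ^ 2) * p.1) with hF
  have hlip : ∀ t, LipschitzOnWith Kr.toNNReal (F t) univ := by
    intro t
    apply LipschitzOnWith.of_dist_le_mul
    intro p _ q _
    have hc : ‖C + E * ((proj t : ℝ) : ℂ) ^ 2‖ ≤ ‖C‖ + ‖E‖ * T ^ 2 := by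
      refine (norm_add_le _ _).trans ?_
      gcongr
      rw [norm_mul, norm_pow]
      gcongr
      rw [Complex.norm_real]
      exact hprojle t
    have h1' : dist p.1 q.1 ≤ dist p q := by
      rw [Prod.dist_eq]; exact le_max_left _ _
    have h21 : dist p.2.1 q.2.1 ≤ dist p q := by
      rw [Prod.dist_eq, Prod.dist_eq]
      exact le_max_of_le_right (le_max_left _ _)
    have h22 : dist p.2.2 q.2.2 ≤ dist p q := by
      rw [Prod.dist_eq, Prod.dist_eq]
      exact le_max_of_le_right (le_max_right _ _)
    have hd : (0:ℝ) ≤ dist p q := dist_nonneg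
    rw [Real.coe_toNNReal _ hKr0]
    rw [Prod.dist_eq, Prod.dist_eq]
    simp only [hF]
    have hthird : dist (A * p.2.2 + B * p.2.1 + (C + E * ((proj t : ℝ) : ℂ) ^ 2) * p.1)
        (A * q.2.2 + B * q.2.1 + (C + E * ((proj t : ℝ) : ℂ) ^ 2) * q.1) ≤ Kr * dist p q := by
      rw [dist_eq_norm]
      have : A * p.2.2 + B * p.2.1 + (C + E * ((proj t : ℝ) : ℂ) ^ 2) * p.1
          - (A * q.2.2 + B * q.2.1 + (C + E * ((proj t : ℝ) : ℂ) ^ 2) * q.1)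
          = A * (p.2.2 - q.2.2) + B * (p.2.1 - q.2.1)
            + (C + E * ((proj t : ℝ) : ℂ) ^ 2) * (p.1 - q.1) := by ring
      rw [this]
      refine (norm_add_le _ _).trans ?_
      refine le_trans (add_le_add_left (norm_add_le _ _) _) ?_
      rw [norm_mul, norm_mul, norm_mul]
      rw [← dist_eq_norm, ← dist_eq_norm, ← dist_eq_norm]
      have e1 : ‖A‖ * dist p.2.2 q.2.2 ≤ ‖A‖ * dist p q := by gcongr
      have e2 : ‖B‖ * dist p.2.1 q.2.1 ≤ ‖B‖ * dist p q := by gcongr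
      have e3 : ‖C + E * ((proj t : ℝ) : ℂ) ^ 2‖ * dist p.1 q.1
          ≤ (‖C‖ + ‖E‖ * T ^ 2) * dist p q := by
        apply mul_le_mul hc h1' dist_nonneg (by positivity)
      nlinarith [norm_nonneg A, norm_nonneg B]
    all_goals
      have hKr1 : 1 ≤ Kr := by
        have := norm_nonneg A; have := norm_nonneg B; have := norm_nonneg C
        have : (0:ℝ) ≤ ‖E‖ * T ^ 2 := by positivity
        simp only [hKr]; linarith
      have hKd : dist p q ≤ Kr * dist p q := le_mul_of_one_le_left hd hKr1
    refine max_le ?_ (max_le ?_ hthird)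
    · exact h21.trans hKd
    · exact h22.trans hKd
  set u : ℝ → ℂ × ℂ × ℂ := fun t => (v t, deriv v t, iteratedDeriv 2 v t) with hu
  have key : EqOn u (fun _ => (0,0,0)) (Ioo (-T) T) := by
    apply ODE_solution_unique_of_mem_Ioo (fun t _ => hlip t) (t₀ := 0)
      (by constructor <;> [linarith; linarith])
    · intro t ht
      refine ⟨?_, mem_univ _⟩
      have : F t (u t) = (deriv v t, iteratedDeriv 2 v t,
          A * iteratedDeriv 2 v t + B * deriv v t + (C + E * (t:ℂ) ^ 2) * v t) := by
        simp only [hF, hu, hprojeq t ht]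
      rw [this]
      exact (hd1 t).prodMk ((hd2 t).prodMk (hd3 t))
    · intro t ht
      refine ⟨?_, mem_univ _⟩
      have : F t ((0,0,0) : ℂ × ℂ × ℂ) = (0, 0, 0) := by
        simp [hF]
      rw [this]
      exact hasDerivAt_const _ _
    · simp [hu, h0, h1, h2]
  have : u ξ₀ = (0,0,0) := key ⟨by cases abs_cases ξ₀ <;> linarith, by cases abs_cases ξ₀ <;> linarith⟩
  have := congrArg Prod.fst this
  simpa [hu] using this

/-- The moment nondegeneracy claim from the end of Section 3: if an entire solution `w` of
`w″ = (y³ + ζy)w` restricts to a Schwartz function `x ↦ w(αx + β)` on the real line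
(`α ≠ 0`) whose moments of order `0, 1, 2` all vanish, then `w ≡ 0`. -/
theorem moment_nondegeneracy (α β ζ : ℂ) (hα : α ≠ 0)
    (w : ℂ → ℂ) (hw : Differentiable ℂ w)
    (heq : ∀ y : ℂ, deriv (deriv w) y = (y ^ 3 + ζ * y) * w y)
    (hschwartz : ∃ g : SchwartzMap ℝ ℂ, ∀ x : ℝ, g x = w (α * (x : ℂ) + β))
    (hmom : ∀ k : ℕ, k ≤ 2 → (∫ x : ℝ, (x : ℂ) ^ k * w (α * (x : ℂ) + β)) = 0) :
    ∀ y : ℂ, w y = 0 := by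
  obtain ⟨g, hg⟩ := hschwartz
  set G : ℝ → ℂ := fun x : ℝ => w (α * (x : ℂ) + β) with hGdef
  have hgG : (⇑g : ℝ → ℂ) = G := funext hg
  -- derivatives of G on the real line
  have hw' : Differentiable ℂ (deriv w) := by
    have := (hw.contDiff (n := 2)).iterate_deriv' 1 1
    simpa using this.differentiable (by simp)
  have hz : ∀ z : ℂ, HasDerivAt (fun z : ℂ => α * z + β) α z := by
    intro z; simpa using ((hasDerivAt_id z).const_mul α).add_const β
  have hWd : ∀ z : ℂ, HasDerivAt (fun z : ℂ => w (α * z + β)) (α * deriv w (α * z + β)) z := by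
    intro z
    simpa [mul_comm, Function.comp_def] using ((hw (α * z + β)).hasDerivAt.comp z (hz z))
  have hWd2 : ∀ z : ℂ, HasDerivAt (fun z : ℂ => α * deriv w (α * z + β))
      (α ^ 2 * deriv (deriv w) (α * z + β)) z := by
    intro z
    have := ((hw' (α * z + β)).hasDerivAt.comp z (hz z)).const_mul α
    exact this.congr_deriv (by ring)
  have hG1 : ∀ x : ℝ, HasDerivAt G (α * deriv w (α * x + β)) x := fun x =>
    (hWd x).comp_ofReal
  have hderivG : deriv G = fun x : ℝ => α * deriv w (α * x + β) := funext fun x => (hG1 x).deriv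
  have hG2 : ∀ x : ℝ, HasDerivAt (deriv G) (α ^ 2 * deriv (deriv w) (α * x + β)) x := by
    intro x
    rw [hderivG]
    exact (hWd2 x).comp_ofReal
  have hiter2 : iteratedDeriv 2 G = fun x : ℝ =>
      (α ^ 2 * ((α * x + β) ^ 3 + ζ * (α * x + β))) * G x := by
    funext x
    rw [show (2:ℕ) = 1 + 1 from rfl, iteratedDeriv_succ, iteratedDeriv_one]
    rw [(hG2 x).deriv, heq]
    ring
  -- integrability
  have Hn : ∀ n : ℕ, Integrable (fun x : ℝ => (x : ℂ) ^ n * G x) := by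
    intro n
    rw [← hgG]
    refine ((g.integrable_pow_mul volume n).mono' ?_ ?_)
    · exact ((Complex.continuous_ofReal.pow n).mul g.continuous).aestronglyMeasurable
    · refine Filter.Eventually.of_forall fun x => ?_
      simp [abs_nonneg]
  have Hnorm : ∀ n : ℕ, Integrable (fun x : ℝ => ‖x‖ ^ n * ‖G x‖) := by
    intro n; rw [← hgG]; exact g.integrable_pow_mul volume n
  have HG : Integrable G := by rw [← hgG]; exact g.integrable
  have hGsmooth : ContDiff ℝ 2 G := by rw [← hgG]; exact g.smooth 2
  -- the Fourier transform v of G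
  set v : ℝ → ℂ := FourierTransform.fourier G with hv
  have hvC : ContDiff ℝ 3 v := by
    have := Real.contDiff_fourier (N := 3) (fun n _ => Hnorm n)
    exact_mod_cast this
  have hvd : ∀ k : ℕ, k ≤ 2 → Differentiable ℝ (deriv^[k] v) := by
    intro k hk
    have h1 : ContDiff ℝ ((1:ℕ) + 1 : ℕ) v := by
      exact_mod_cast hvC.of_le (by exact_mod_cast (by norm_num : ((2:ℕ):WithTop ℕ∞) ≤ ((3:ℕ):WithTop ℕ∞)))
    have h2 : ContDiff ℝ ((1:ℕ) + 2 : ℕ) v := by exact_mod_cast hvC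
    interval_cases k
    · exact hvC.differentiable (by simp)
    · exact (ContDiff.iterate_deriv' 1 1 h1).differentiable (by simp)
    · exact (ContDiff.iterate_deriv' 1 2 h2).differentiable (by simp)
  have hID : ∀ n : ℕ, n ≤ 3 → iteratedDeriv n v =
      FourierTransform.fourier (fun x : ℝ => (-2 * Real.pi * Complex.I * x) ^ n • G x) := by
    intro n hn
    exact Real.iteratedDeriv_fourier (N := 3)
      (fun k hk => by
        have : (fun x : ℝ => x ^ k • G x) = fun x : ℝ => (x : ℂ) ^ k * G x := by
          funext x
          rw [← Complex.ofReal_pow, Complex.real_smul]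
        rw [this]; exact Hn k)
      (by exact_mod_cast hn)
  -- moments M n ξ
  set M : ℕ → ℝ → ℂ := fun n ξ => FourierTransform.fourier (fun x : ℝ => (x : ℂ) ^ n * G x) ξ with hMdef
  have hM : ∀ n : ℕ, n ≤ 3 → ∀ ξ : ℝ, iteratedDeriv n v ξ
      = (-2 * Real.pi * Complex.I) ^ n * M n ξ := by
    intro n hn ξ
    rw [hID n hn, hMdef]
    simp only
    rw [Real.fourier_real_eq_integral_exp_smul,
      Real.fourier_real_eq_integral_exp_smul, ← integral_const_mul]
    congr 1; funext x
    simp only [smul_eq_mul]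
    ring
  -- the key identity from the ODE for G
  set a3 : ℂ := α ^ 5 with ha3def
  set a2 : ℂ := 3 * α ^ 4 * β with ha2def
  set a1 : ℂ := α ^ 3 * (3 * β ^ 2 + ζ) with ha1def
  set a0 : ℂ := α ^ 2 * (β ^ 3 + ζ * β) with ha0def
  have hpoly : ∀ x : ℝ, α ^ 2 * ((α * x + β) ^ 3 + ζ * (α * x + β))
      = a3 * (x:ℂ)^3 + a2 * (x:ℂ)^2 + a1 * (x:ℂ) + a0 := by
    intro x
    simp only [ha3def, ha2def, ha1def, ha0def]
    ring
  have hFint : ∀ (n : ℕ) (ξ : ℝ), Integrable (fun x : ℝ =>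
      Complex.exp (↑(-2 * Real.pi * x * ξ) * Complex.I) * ((x:ℂ) ^ n * G x)) := by
    intro n ξ
    refine (Hn n).bdd_mul (c := 1) ?_ (Filter.Eventually.of_forall fun x => ?_)
    · exact (Complex.continuous_exp.comp
        (by continuity : Continuous fun x : ℝ => (↑(-2 * Real.pi * x * ξ) * Complex.I))).aestronglyMeasurable
    · rw [Complex.norm_exp_ofReal_mul_I]
  have hEq : ∀ ξ : ℝ, a3 * M 3 ξ + a2 * M 2 ξ + a1 * M 1 ξ + a0 * M 0 ξ
      = (2 * Real.pi * Complex.I * ξ) ^ 2 * v ξ := by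
    intro ξ
    have hpolyint : Integrable (fun x : ℝ =>
        α ^ 2 * ((α * (x:ℂ) + β) ^ 3 + ζ * (α * (x:ℂ) + β)) * G x) := by
      have hrw : (fun x : ℝ => α ^ 2 * ((α * (x:ℂ) + β) ^ 3 + ζ * (α * (x:ℂ) + β)) * G x)
          = fun x : ℝ => a3 * ((x:ℂ) ^ 3 * G x) + (a2 * ((x:ℂ) ^ 2 * G x)
            + (a1 * ((x:ℂ) ^ 1 * G x) + a0 * ((x:ℂ) ^ 0 * G x))) := by
        funext x
        rw [show α ^ 2 * ((α * (x:ℂ) + β) ^ 3 + ζ * (α * (x:ℂ) + β)) * G x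
          = (α ^ 2 * ((α * (x:ℂ) + β) ^ 3 + ζ * (α * (x:ℂ) + β))) * G x from rfl, hpoly x]
        ring
      rw [hrw]
      exact ((Hn 3).const_mul a3).add (((Hn 2).const_mul a2).add
        (((Hn 1).const_mul a1).add ((Hn 0).const_mul a0)))
    have hint' : ∀ n : ℕ, (n:ℕ∞) ≤ (2:ℕ∞) → Integrable (iteratedDeriv n G) := by
      intro n hn
      have hn2 : n ≤ 2 := by exact_mod_cast hn
      interval_cases n
      · simpa [iteratedDeriv_zero] using HG
      · rw [iteratedDeriv_one, ← hgG]
        exact ((SchwartzMap.derivCLM ℝ ℂ g).integrable).congr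
          (Filter.Eventually.of_forall fun x => SchwartzMap.derivCLM_apply (𝕜 := ℝ) g x)
      · rw [hiter2]
        exact hpolyint
    have h2G := congrFun (Real.fourier_iteratedDeriv (N := (2:ℕ∞)) hGsmooth hint'
      (le_refl (2:ℕ∞))) ξ
    rw [Real.fourier_real_eq_integral_exp_smul] at h2G
    have hexp : (fun x : ℝ => Complex.exp (↑(-2 * Real.pi * x * ξ) * Complex.I) • iteratedDeriv 2 G x)
        = fun x : ℝ =>
          a3 * (Complex.exp (↑(-2 * Real.pi * x * ξ) * Complex.I) * ((x:ℂ) ^ 3 * G x))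
          + (a2 * (Complex.exp (↑(-2 * Real.pi * x * ξ) * Complex.I) * ((x:ℂ) ^ 2 * G x))
          + (a1 * (Complex.exp (↑(-2 * Real.pi * x * ξ) * Complex.I) * ((x:ℂ) ^ 1 * G x))
          + a0 * (Complex.exp (↑(-2 * Real.pi * x * ξ) * Complex.I) * ((x:ℂ) ^ 0 * G x)))) := by
      funext x
      simp only [hiter2, smul_eq_mul]
      rw [show α ^ 2 * ((α * x + β) ^ 3 + ζ * (α * x + β)) * G x
        = (α ^ 2 * ((α * x + β) ^ 3 + ζ * (α * x + β))) * G x from rfl, hpoly x]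
      ring
    have i3 : Integrable (fun x : ℝ =>
        a3 * (Complex.exp (↑(-2 * Real.pi * x * ξ) * Complex.I) * ((x:ℂ) ^ 3 * G x))) :=
      (hFint 3 ξ).const_mul a3
    have i2 : Integrable (fun x : ℝ =>
        a2 * (Complex.exp (↑(-2 * Real.pi * x * ξ) * Complex.I) * ((x:ℂ) ^ 2 * G x))) :=
      (hFint 2 ξ).const_mul a2
    have i1 : Integrable (fun x : ℝ =>
        a1 * (Complex.exp (↑(-2 * Real.pi * x * ξ) * Complex.I) * ((x:ℂ) ^ 1 * G x))) :=
      (hFint 1 ξ).const_mul a1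
    have i0 : Integrable (fun x : ℝ =>
        a0 * (Complex.exp (↑(-2 * Real.pi * x * ξ) * Complex.I) * ((x:ℂ) ^ 0 * G x))) :=
      (hFint 0 ξ).const_mul a0
    have i10 : Integrable (fun x : ℝ =>
        a1 * (Complex.exp (↑(-2 * Real.pi * x * ξ) * Complex.I) * ((x:ℂ) ^ 1 * G x))
        + a0 * (Complex.exp (↑(-2 * Real.pi * x * ξ) * Complex.I) * ((x:ℂ) ^ 0 * G x))) :=
      i1.add i0
    have i210 : Integrable (fun x : ℝ =>
        a2 * (Complex.exp (↑(-2 * Real.pi * x * ξ) * Complex.I) * ((x:ℂ) ^ 2 * G x))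
        + (a1 * (Complex.exp (↑(-2 * Real.pi * x * ξ) * Complex.I) * ((x:ℂ) ^ 1 * G x))
        + a0 * (Complex.exp (↑(-2 * Real.pi * x * ξ) * Complex.I) * ((x:ℂ) ^ 0 * G x)))) :=
      i2.add i10
    rw [hexp] at h2G
    rw [integral_add i3 i210, integral_add i2 i10, integral_add i1 i0,
      integral_const_mul, integral_const_mul, integral_const_mul, integral_const_mul] at h2G
    have hMint : ∀ n : ℕ, (∫ x : ℝ, Complex.exp (↑(-2 * Real.pi * x * ξ) * Complex.I)
        * ((x:ℂ) ^ n * G x)) = M n ξ := by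
      intro n
      rw [hMdef]
      simp only
      rw [Real.fourier_real_eq_integral_exp_smul]
      simp only [smul_eq_mul]
    rw [hMint 3, hMint 2, hMint 1, hMint 0, smul_eq_mul] at h2G
    rw [← h2G]
    ring
  -- constants for the third-order ODE satisfied by v
  have hc : (-2 * (Real.pi:ℂ) * Complex.I) ≠ 0 := by
    simp [Real.pi_ne_zero, Complex.I_ne_zero]
  have ha3 : a3 ≠ 0 := pow_ne_zero _ hα
  obtain ⟨A, B, Cc, Ee, hABCE⟩ : ∃ A B Cc Ee : ℂ, ∀ ξ : ℝ, iteratedDeriv 3 v ξ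
      = A * iteratedDeriv 2 v ξ + B * deriv v ξ + (Cc + Ee * (ξ:ℂ) ^ 2) * v ξ := by
    refine ⟨-((-2*(Real.pi:ℂ)*Complex.I) * a2)/a3, -((-2*(Real.pi:ℂ)*Complex.I)^2 * a1)/a3,
      -((-2*(Real.pi:ℂ)*Complex.I)^3 * a0)/a3, (-2*(Real.pi:ℂ)*Complex.I)^5/a3, ?_⟩
    intro ξ
    have e3 := hM 3 (by norm_num) ξ
    have e2 := hM 2 (by norm_num) ξ
    have e1 := hM 1 (by norm_num) ξ
    have e0 := hM 0 (by norm_num) ξ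
    rw [iteratedDeriv_one] at e1
    rw [iteratedDeriv_zero] at e0
    have hq := hEq ξ
    rw [e0] at hq
    rw [e3, e2, e1, e0]
    linear_combination ((-2*(Real.pi:ℂ)*Complex.I)^3 * a3⁻¹) * hq
      - ((-2*(Real.pi:ℂ)*Complex.I)^3 * M 3 ξ) * (mul_inv_cancel₀ ha3)
  -- derivative facts for v
  have hd1 : ∀ ξ : ℝ, HasDerivAt v (deriv v ξ) ξ := fun ξ => ((hvd 0 (by norm_num)) ξ).hasDerivAt
  have hd2 : ∀ ξ : ℝ, HasDerivAt (deriv v) (iteratedDeriv 2 v ξ) ξ := by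
    intro ξ
    have h := ((hvd 1 (by norm_num)) ξ).hasDerivAt
    rw [Function.iterate_one] at h
    have h2 : iteratedDeriv 2 v ξ = deriv (deriv v) ξ := by
      rw [show (2:ℕ) = 1+1 from rfl, iteratedDeriv_succ, iteratedDeriv_one]
    rw [h2]; exact h
  have hd3 : ∀ ξ : ℝ, HasDerivAt (iteratedDeriv 2 v)
      (A * iteratedDeriv 2 v ξ + B * deriv v ξ + (Cc + Ee * (ξ:ℂ) ^ 2) * v ξ) ξ := by
    intro ξ
    rw [← hABCE ξ]
    have h := ((hvd 2 (by norm_num)) ξ).hasDerivAt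
    have h3 : iteratedDeriv 3 v ξ = deriv (deriv^[2] v) ξ := by
      rw [show (3:ℕ) = 2+1 from rfl, iteratedDeriv_succ, iteratedDeriv_eq_iterate]
    rw [h3, iteratedDeriv_eq_iterate]
    exact h
  -- vanishing moments give vanishing initial data
  have hM00 : ∀ n : ℕ, n ≤ 2 → M n 0 = 0 := by
    intro n hn
    have hMn : M n 0 = ∫ x : ℝ, (x:ℂ) ^ n * G x := by
      rw [hMdef]
      simp only
      rw [Real.fourier_real_eq_integral_exp_smul]
      simp
    rw [hMn]
    simp only [hGdef]
    exact hmom n hn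
  have h0 : v 0 = 0 := by
    have e0 := hM 0 (by norm_num) 0
    rw [iteratedDeriv_zero] at e0
    rw [e0, hM00 0 (by norm_num), mul_zero]
  have h1 : deriv v 0 = 0 := by
    have e1 := hM 1 (by norm_num) 0
    rw [iteratedDeriv_one] at e1
    rw [e1, hM00 1 (by norm_num), mul_zero]
  have h2 : iteratedDeriv 2 v 0 = 0 := by
    rw [hM 2 (by norm_num) 0, hM00 2 (by norm_num), mul_zero]
  -- v vanishes identically, hence G vanishes
  have hvzero : ∀ ξ : ℝ, v ξ = 0 := ode3_zero A B Cc Ee v hd1 hd2 hd3 h0 h1 h2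
  have hFv : FourierTransform.fourier G = 0 := funext fun ξ => hvzero ξ
  have hGzero : ∀ x : ℝ, G x = 0 := by
    have hcont : Continuous G := by rw [← hgG]; exact g.continuous
    have hInt1 : Integrable (FourierTransform.fourier G) := by
      rw [hFv]; exact integrable_zero _ _ _
    have hinv := hcont.fourierInv_fourier_eq HG hInt1
    intro x
    have hx := congrFun hinv x
    rw [hFv] at hx
    rw [← hx, Real.fourierInv_eq]
    simp
  -- identity theorem
  intro y
  set Wf : ℂ → ℂ := fun z => w (α * z + β) with hWf
  have hWdiff : Differentiable ℂ Wf := by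
    intro z
    exact DifferentiableAt.comp z (hw _) (((differentiableAt_id).const_mul α).add_const β)
  have hWanal : AnalyticOnNhd ℂ Wf univ :=
    hWdiff.differentiableOn.analyticOnNhd isOpen_univ
  have hfreq : ∃ᶠ z in nhdsWithin (0:ℂ) {(0:ℂ)}ᶜ, Wf z = 0 := by
    have htend : Filter.Tendsto (fun n : ℕ => ((((n:ℝ)+1)⁻¹ : ℝ) : ℂ)) Filter.atTop
        (nhdsWithin (0:ℂ) {(0:ℂ)}ᶜ) := by
      rw [tendsto_nhdsWithin_iff]
      constructor
      · have h1 : Filter.Tendsto (fun n : ℕ => ((n:ℝ)+1)⁻¹) Filter.atTop (nhds 0) := by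
          simpa only [one_div] using tendsto_one_div_add_atTop_nhds_zero_nat (𝕜 := ℝ)
        have h2 := (Complex.continuous_ofReal.tendsto 0).comp h1
        simpa [Function.comp_def] using h2
      · refine Filter.Eventually.of_forall fun n => ?_
        simp only [mem_compl_iff, mem_singleton_iff]
        intro hcontra
        have h0' : (((n:ℝ)+1)⁻¹ : ℝ) = 0 := by exact_mod_cast hcontra
        have hne : ((n:ℝ)+1)⁻¹ ≠ 0 := by positivity
        exact hne h0'
    refine htend.frequently (Filter.Frequently.of_forall fun n => ?_)
    exact hGzero (((n:ℝ)+1)⁻¹)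
  have hW0 : EqOn Wf 0 univ :=
    hWanal.eqOn_zero_of_preconnected_of_frequently_eq_zero isPreconnected_univ
      (mem_univ (0:ℂ)) hfreq
  have hy := hW0 (mem_univ (α⁻¹ * (y - β)))
  have : α * (α⁻¹ * (y - β)) + β = y := by rw [← mul_assoc, mul_inv_cancel₀ hα, one_mul]; ring
  simpa [hWf, this] using hy
end

section
/- Let b₀ ∈ ℝ with 0 < |b₀| < 2/(3√3), and define q : ℝ³ → ℝ by q(y₁, η₀, η₁) = η₀³ − (η₁² + y₁²)η₀ − b₀y₁³. Let Γ be the connected component of the point (0, 1, 0) in the open set {v ∈ ℝ³ : q(v) ≠ 0}. Then every point (y₁, η₀, η₁) ∈ Γ satisfies η₀ > 0. -/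
/-- The hyperbolicity cone of the localization `q(y₁, η₀, η₁) = η₀³ − (η₁² + y₁²)η₀ − b₀y₁³`
at a triple point: every point of the connected component of `(0, 1, 0)` in `{q ≠ 0}` has
`η₀ > 0`. -/
theorem hyperbolicity_cone_positive (b₀ : ℝ) (hb₀ : 0 < |b₀|)
    (hb₀' : |b₀| < 2 / (3 * Real.sqrt 3)) :
    ∀ v ∈ connectedComponentIn
        {v : ℝ × ℝ × ℝ | v.2.1 ^ 3 - (v.2.2 ^ 2 + v.1 ^ 2) * v.2.1 - b₀ * v.1 ^ 3 ≠ 0}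
        ((0, 1, 0) : ℝ × ℝ × ℝ),
      0 < v.2.1 := by
  set q : ℝ × ℝ × ℝ → ℝ :=
    fun v => v.2.1 ^ 3 - (v.2.2 ^ 2 + v.1 ^ 2) * v.2.1 - b₀ * v.1 ^ 3 with hqdef
  set g : ℝ × ℝ × ℝ → ℝ :=
    fun v => v.2.1 - Real.sqrt ((v.2.2 ^ 2 + v.1 ^ 2) / 3) with hgdef
  have hqc : Continuous q := by fun_prop
  have hgc : Continuous g := by
    apply Continuous.sub (by fun_prop)
    exact Real.continuous_sqrt.comp (by fun_prop)
  set S : Set (ℝ × ℝ × ℝ) := {v | 0 < q v ∧ 0 < g v} with hSdef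
  set T : Set (ℝ × ℝ × ℝ) := {v | q v < 0} ∪ {v | 0 < q v ∧ g v < 0} with hTdef
  have hS : IsOpen S :=
    (isOpen_lt continuous_const hqc).inter (isOpen_lt continuous_const hgc)
  have hT : IsOpen T :=
    (isOpen_lt hqc continuous_const).union
      ((isOpen_lt continuous_const hqc).inter (isOpen_lt hgc continuous_const))
  have hdisj : Disjoint S T := by
    rw [Set.disjoint_left]
    rintro v ⟨hq1, hg1⟩ (hv | ⟨_, hv⟩)
    · exact absurd (show q v < 0 from hv) (by linarith)
    · exact absurd (show g v < 0 from hv) (by linarith)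
  -- the key fact: if q v > 0 then g v ≠ 0
  have hkey : ∀ v : ℝ × ℝ × ℝ, 0 < q v → g v ≠ 0 := by
    rintro ⟨y, e0, e1⟩ hqv hgv
    set a : ℝ := e1 ^ 2 + y ^ 2 with hadef
    have ha : 0 ≤ a := by positivity
    set k : ℝ := Real.sqrt (a / 3) with hkdef
    have hk0 : 0 ≤ k := Real.sqrt_nonneg _
    have hk2 : k ^ 2 = a / 3 := Real.sq_sqrt (by linarith)
    have he0 : e0 = k := by
      have : g (y, e0, e1) = e0 - k := rfl
      rw [this] at hgv; linarith [sub_eq_zero.mp hgv]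
    have hqv' : q (y, e0, e1) = -2 * k ^ 3 - b₀ * y ^ 3 := by
      simp only [hqdef, he0]
      have : a = 3 * k ^ 2 := by rw [hk2]; ring
      nlinarith [this]
    -- bound |b₀ * y^3| ≤ 2 k^3
    have hs3 : (0:ℝ) < Real.sqrt 3 := Real.sqrt_pos.mpr (by norm_num)
    have hs3sq : Real.sqrt 3 ^ 2 = 3 := Real.sq_sqrt (by norm_num)
    have hy : |y| ≤ Real.sqrt 3 * k := by
      have h1 : y ^ 2 ≤ a := by nlinarith [sq_nonneg e1]
      have h2 : |y| ^ 2 ≤ (Real.sqrt 3 * k) ^ 2 := by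
        rw [sq_abs, mul_pow, hs3sq, hk2]; linarith
      nlinarith [h2, abs_nonneg y, mul_nonneg hs3.le hk0]
    have hy3 : |y| ^ 3 ≤ (Real.sqrt 3 * k) ^ 3 :=
      pow_le_pow_left₀ (abs_nonneg y) hy 3
    have hb : |b₀| ≤ 2 / (3 * Real.sqrt 3) := le_of_lt hb₀'
    have habs : |b₀ * y ^ 3| ≤ 2 * k ^ 3 := by
      have h1 : |b₀ * y ^ 3| = |b₀| * |y| ^ 3 := by
        rw [abs_mul, abs_pow]
      have h2 : |b₀| * |y| ^ 3 ≤ (2 / (3 * Real.sqrt 3)) * (Real.sqrt 3 * k) ^ 3 :=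
        mul_le_mul hb hy3 (by positivity) (by positivity)
      have h3 : (2 / (3 * Real.sqrt 3)) * (Real.sqrt 3 * k) ^ 3 = 2 * k ^ 3 := by
        have h4 : (Real.sqrt 3) ^ 3 = 3 * Real.sqrt 3 := by rw [pow_succ, hs3sq]
        rw [mul_pow, h4]
        field_simp
      rw [h1]; linarith
    have := abs_le.mp habs
    have : q (y, e0, e1) ≤ 0 := by rw [hqv']; linarith [this.1]
    linarith
  -- the component is preconnected and covered
  intro v hv
  have hbaseU : ((0, 1, 0) : ℝ × ℝ × ℝ) ∈
      {v : ℝ × ℝ × ℝ | v.2.1 ^ 3 - (v.2.2 ^ 2 + v.1 ^ 2) * v.2.1 - b₀ * v.1 ^ 3 ≠ 0} := by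
    norm_num
  have hbaseS : ((0, 1, 0) : ℝ × ℝ × ℝ) ∈ S := by
    constructor
    · show (0:ℝ) < 1 ^ 3 - (0 ^ 2 + 0 ^ 2) * 1 - b₀ * 0 ^ 3; norm_num
    · show (0:ℝ) < 1 - Real.sqrt ((0 ^ 2 + 0 ^ 2) / 3); simp
  have hcover : connectedComponentIn
      {v : ℝ × ℝ × ℝ | v.2.1 ^ 3 - (v.2.2 ^ 2 + v.1 ^ 2) * v.2.1 - b₀ * v.1 ^ 3 ≠ 0}
      ((0,1,0) : ℝ × ℝ × ℝ) ⊆ S ∪ T := by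
    refine (connectedComponentIn_subset _ _).trans ?_
    intro w hw
    rcases lt_trichotomy (q w) 0 with h | h | h
    · exact Or.inr (Or.inl h)
    · exact absurd h hw
    · rcases lt_trichotomy (g w) 0 with h' | h' | h'
      · exact Or.inr (Or.inr ⟨h, h'⟩)
      · exact absurd h' (hkey w h)
      · exact Or.inl ⟨h, h'⟩
  have hsub : connectedComponentIn
      {v : ℝ × ℝ × ℝ | v.2.1 ^ 3 - (v.2.2 ^ 2 + v.1 ^ 2) * v.2.1 - b₀ * v.1 ^ 3 ≠ 0}
      ((0,1,0) : ℝ × ℝ × ℝ) ⊆ S := by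
    apply (isPreconnected_connectedComponentIn).subset_left_of_subset_union hS hT hdisj hcover
    exact ⟨(0,1,0), mem_connectedComponentIn hbaseU, hbaseS⟩
  obtain ⟨hq1, hg1⟩ := hsub hv
  have : 0 ≤ Real.sqrt ((v.2.2 ^ 2 + v.1 ^ 2) / 3) := Real.sqrt_nonneg _
  have hgv : g v = v.2.1 - Real.sqrt ((v.2.2 ^ 2 + v.1 ^ 2) / 3) := rfl
  linarith [hgv ▸ hg1]
end

section
/- Let b ∈ ℝ with 0 < |b| < 1. There exist no open neighborhood V of (0,0) in ℝ² and no C^∞ functions L, A, B : V → ℝ such that for all (x, ξ) ∈ V and all τ ∈ ℝ, τ³ − 3(x² + ξ²)τ − 2bx³ = (τ − L(x, ξ)) · (τ² + A(x, ξ)τ + B(x, ξ)). -/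
/-- Non-factorizability of the principal symbol with a smooth root: for `0 < |b| < 1`
there is no neighborhood `V` of the origin and no smooth functions `L, A, B` on `V` with
`τ³ − 3(x² + ξ²)τ − 2bx³ = (τ − L(x,ξ))(τ² + A(x,ξ)τ + B(x,ξ))` on `V`. -/
theorem no_smooth_factorization (b : ℝ) (hb₀ : 0 < |b|) (hb₁ : |b| < 1) :
    ¬ ∃ V : Set (ℝ × ℝ), IsOpen V ∧ ((0, 0) : ℝ × ℝ) ∈ V ∧
        ∃ L A B : ℝ × ℝ → ℝ,
          ContDiffOn ℝ (⊤ : ℕ∞) L V ∧ ContDiffOn ℝ (⊤ : ℕ∞) A V ∧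
          ContDiffOn ℝ (⊤ : ℕ∞) B V ∧
          ∀ p ∈ V, ∀ τ : ℝ,
            τ ^ 3 - 3 * (p.1 ^ 2 + p.2 ^ 2) * τ - 2 * b * p.1 ^ 3
              = (τ - L p) * (τ ^ 2 + A p * τ + B p) := by
  rintro ⟨V, hVo, hV0, L, A, B, hL, hA, hB, hfac⟩
  have hb : b ≠ 0 := fun h => by simp [h] at hb₀
  -- L is a root of the cubic on V
  have hroot : ∀ p ∈ V, L p ^ 3 - 3 * (p.1 ^ 2 + p.2 ^ 2) * L p - 2 * b * p.1 ^ 3 = 0 := by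
    intro p hp
    have h := hfac p hp (L p)
    linarith [h, (by ring : (L p - L p) * (L p ^ 2 + A p * L p + B p) = 0)]
  -- L (0,0) = 0
  have hL0 : L (0, 0) = 0 := by simpa using hroot (0, 0) hV0
  -- differentiability at the origin
  have hdiff : DifferentiableAt ℝ L (0, 0) :=
    (hL.contDiffAt (hVo.mem_nhds hV0)).differentiableAt (by simp)
  set φ := fderiv ℝ L (0, 0) with hφ
  have hder : HasFDerivAt L φ (0, 0) := hdiff.hasFDerivAt
  -- directional equation
  have key : ∀ d : ℝ × ℝ, (φ d) ^ 3 - 3 * (d.1 ^ 2 + d.2 ^ 2) * (φ d) - 2 * b * d.1 ^ 3 = 0 := by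
    intro d
    have hcurve : HasDerivAt (fun r : ℝ => r • d) d 0 := by
      simpa using (hasDerivAt_id (0 : ℝ)).smul_const d
    have h0d : (fun r : ℝ => r • d) 0 = ((0, 0) : ℝ × ℝ) := by simp [Prod.ext_iff]
    have hder' : HasFDerivAt L φ ((fun r : ℝ => r • d) 0) := by rw [h0d]; exact hder
    have hg : HasDerivAt (fun r : ℝ => L (r • d)) (φ d) 0 := by
      have := hder'.comp_hasDerivAt 0 hcurve
      exact this
    have hslope := hasDerivAt_iff_tendsto_slope.mp hg
    set F : ℝ → ℝ := fun r => slope (fun r : ℝ => L (r • d)) 0 r with hF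
    have htend : Filter.Tendsto
        (fun r => F r ^ 3 - 3 * (d.1 ^ 2 + d.2 ^ 2) * F r - 2 * b * d.1 ^ 3)
        (nhdsWithin 0 {(0:ℝ)}ᶜ)
        (nhds ((φ d) ^ 3 - 3 * (d.1 ^ 2 + d.2 ^ 2) * (φ d) - 2 * b * d.1 ^ 3)) := by
      exact ((hslope.pow 3).sub ((tendsto_const_nhds).mul hslope)).sub
        tendsto_const_nhds
    have hev : ∀ᶠ r in nhdsWithin (0:ℝ) {(0:ℝ)}ᶜ,
        F r ^ 3 - 3 * (d.1 ^ 2 + d.2 ^ 2) * F r - 2 * b * d.1 ^ 3 = 0 := by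
      have hcont : Filter.Tendsto (fun r : ℝ => r • d) (nhds 0) (nhds ((0,0) : ℝ × ℝ)) := by
        have : Continuous (fun r : ℝ => r • d) := continuous_id.smul continuous_const
        simpa [h0d] using this.tendsto 0
      have hmem : ∀ᶠ r in nhds (0:ℝ), r • d ∈ V := hcont.eventually (hVo.eventually_mem hV0)
      filter_upwards [hmem.filter_mono nhdsWithin_le_nhds, self_mem_nhdsWithin] with r hrV hr0
      have hr0' : (r : ℝ) ≠ 0 := hr0
      have h := hroot (r • d) hrV
      have hL00 : L (0 : ℝ × ℝ) = 0 := by exact hL0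
      have hFr : F r = L (r • d) / r := by
        simp [hF, slope, hL00, div_eq_inv_mul]
      rw [hFr]
      have h1 : (r • d).1 = r * d.1 := rfl
      have h2 : (r • d).2 = r * d.2 := rfl
      rw [h1, h2] at h
      have key2 : (L (r • d) / r) ^ 3 - 3 * (d.1 ^ 2 + d.2 ^ 2) * (L (r • d) / r)
          - 2 * b * d.1 ^ 3
          = (L (r • d) ^ 3 - 3 * ((r * d.1) ^ 2 + (r * d.2) ^ 2) * L (r • d)
              - 2 * b * (r * d.1) ^ 3) / r ^ 3 := by
        field_simp
      rw [key2, h, zero_div]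
    exact tendsto_nhds_unique htend
      ((Filter.tendsto_congr' (by filter_upwards [hev] with r h using h)).mpr
        tendsto_const_nhds)
  -- evaluate at four directions
  set a := φ (1, 0) with ha
  set c := φ (0, 1) with hc
  have hsum : φ (1, 1) = a + c := by
    rw [ha, hc, ← map_add]; norm_num
  have hdiff2 : φ (1, -1) = a - c := by
    rw [ha, hc, ← map_sub]; norm_num
  have h2 := key (1, 0)
  have h1 := key (0, 1)
  have h3 := key (1, 1)
  have h4 := key (1, -1)
  rw [hsum] at h3
  rw [hdiff2] at h4
  rw [← ha] at h2
  rw [← hc] at h1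
  norm_num at h1 h2 h3 h4
  have E1 : c ^ 3 - 3 * c = 0 := by linarith
  have E2 : a ^ 3 - 3 * a - 2 * b = 0 := by linarith
  have E3 : (a + c) ^ 3 - 6 * (a + c) - 2 * b = 0 := by linarith
  have E4 : (a - c) ^ 3 - 6 * (a - c) - 2 * b = 0 := by linarith
  by_cases hcz : c = 0
  · have ha0 : a = 0 := by
      have E3' : a ^ 3 - 6 * a - 2 * b = 0 := by
        rw [hcz] at E3; linear_combination E3
      linarith
    rw [ha0] at E2
    norm_num at E2
    exact hb E2
  · have hc2 : c ^ 2 = 3 := by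
      have hfactor : c * (c ^ 2 - 3) = 0 := by linear_combination E1
      rcases mul_eq_zero.mp hfactor with h | h
      · exact absurd h hcz
      · linarith
    have hsum4 : 2 * a ^ 3 + 6 * a * c ^ 2 - 12 * a - 4 * b = 0 := by
      linear_combination E3 + E4
    have h5 : 2 * a ^ 3 + 6 * a - 4 * b = 0 := by
      linear_combination hsum4 - 6 * a * hc2
    have h6 : 2 * a ^ 3 - 6 * a - 4 * b = 0 := by linear_combination 2 * E2
    have ha0 : a = 0 := by linarith
    rw [ha0] at E2
    norm_num at E2
    exact hb E2
end
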